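/- arXiv:2410.04043 — 2 statements merged into one kernel-verified Lean document; each statement's English description precedes it below -/
import Mathlib

section
/- Under the unique-optimum assumption, there exists δ̄ > 0 such that for every δ with 0 ≤ δ ≤ δ̄: D̂_δ ≤ D_δ ≤ 2·D̂_δ and r_δ = δ/(‖x*‖₁ + ‖s*‖₁), where D̂_δ := δ · max{ max_{1≤j≤n−m} √(‖(B⁻¹N)_{·,j}‖² + 1)/s*_{m+j}, max_{1≤i≤m} √(‖(B⁻¹N)_{i,·}‖² + 1)/x*_i }. -/
open Matrix
open scoped BigOperators

noncomputable section

namespace LPPaper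

/-- Euclidean norm of a finite real vector. -/
def enorm {k : ℕ} (v : Fin k → ℝ) : ℝ := Real.sqrt (∑ i, (v i) ^ 2)

/-- ℓ₁ norm of a finite real vector. -/
def l1 {k : ℕ} (v : Fin k → ℝ) : ℝ := ∑ i, |v i|

/-- Spectral norm (operator 2-norm w.r.t. Euclidean norms) of a real matrix. -/
def specNorm {α β : Type*} [Fintype α] [Fintype β] [DecidableEq β] (M : Matrix α β ℝ) : ℝ :=
  ‖LinearMap.toContinuousLinearMap (Matrix.toEuclideanLin M)‖

variable {m n : ℕ}

/-- Embedding of basic indices (the first `m` coordinates). -/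
def bIdx (hmn : m ≤ n) (i : Fin m) : Fin n := Fin.castLE hmn i

/-- Embedding of nonbasic indices (the last `n - m` coordinates). -/
def nIdx (hmn : m ≤ n) (j : Fin (n - m)) : Fin n := ⟨m + j.val, by have := j.isLt; omega⟩

/-- The basis matrix `B`: the first `m` columns of `A`. -/
def Bmat (hmn : m ≤ n) (A : Matrix (Fin m) (Fin n) ℝ) : Matrix (Fin m) (Fin m) ℝ :=
  Matrix.of fun i j => A i (bIdx hmn j)

/-- The nonbasic matrix `N`: the last `n - m` columns of `A`. -/
def Nmat (hmn : m ≤ n) (A : Matrix (Fin m) (Fin n) ℝ) : Matrix (Fin m) (Fin (n - m)) ℝ :=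
  Matrix.of fun i j => A i (nIdx hmn j)

/-- The simplex tableau `B⁻¹N` at the optimal basis. -/
def BN (hmn : m ≤ n) (A : Matrix (Fin m) (Fin n) ℝ) : Matrix (Fin m) (Fin (n - m)) ℝ :=
  (Bmat hmn A)⁻¹ * Nmat hmn A

/-- `q := Aᵀ(AAᵀ)⁻¹ b`. -/
def qvec (A : Matrix (Fin m) (Fin n) ℝ) (b : Fin m → ℝ) : Fin n → ℝ :=
  Aᵀ *ᵥ ((A * Aᵀ)⁻¹ *ᵥ b)

/-- Primal feasibility: `Ax = b`, `x ≥ 0`. -/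
def PrimalFeasible (A : Matrix (Fin m) (Fin n) ℝ) (b : Fin m → ℝ) (x : Fin n → ℝ) : Prop :=
  A *ᵥ x = b ∧ ∀ i, 0 ≤ x i

/-- Dual feasibility: `Aᵀy + s = c`, `s ≥ 0`. -/
def DualFeasible (A : Matrix (Fin m) (Fin n) ℝ) (c : Fin n → ℝ) (y : Fin m → ℝ)
    (s : Fin n → ℝ) : Prop :=
  Aᵀ *ᵥ y + s = c ∧ ∀ i, 0 ≤ s i

/-- The unique-optimum assumption (Assumption 1 of the paper), with the optimal basis being
(after a permutation of the variables) the set of the first `m` indices: the rows of `A` are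
linearly independent, `x*` is the unique primal optimal solution, `(y*, s*)` the unique dual
optimal solution, the basis matrix `B` is invertible, `x*ᵢ > 0` exactly for the first `m`
indices and `s*ᵢ > 0` exactly for the remaining indices. -/
structure UniqueOpt (hmn : m ≤ n) (A : Matrix (Fin m) (Fin n) ℝ) (b : Fin m → ℝ)
    (c : Fin n → ℝ) (xstar : Fin n → ℝ) (ystar : Fin m → ℝ) (sstar : Fin n → ℝ) : Prop where
  rows_indep : LinearIndependent ℝ (fun i => A i)
  primal_feas : PrimalFeasible A b xstar
  primal_opt : ∀ x, PrimalFeasible A b x → c ⬝ᵥ xstar ≤ c ⬝ᵥ x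
  primal_uniq : ∀ x, PrimalFeasible A b x → c ⬝ᵥ x = c ⬝ᵥ xstar → x = xstar
  dual_feas : DualFeasible A c ystar sstar
  dual_opt : ∀ y s, DualFeasible A c y s → b ⬝ᵥ y ≤ b ⬝ᵥ ystar
  dual_uniq : ∀ y s, DualFeasible A c y s → b ⬝ᵥ y = b ⬝ᵥ ystar → y = ystar ∧ s = sstar
  basis_isUnit : IsUnit (Bmat hmn A).det
  xstar_supp : ∀ i : Fin n, 0 < xstar i ↔ (i : ℕ) < m
  sstar_supp : ∀ i : Fin n, 0 < sstar i ↔ m ≤ (i : ℕ)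

/-- The `max` factor appearing in the geometric condition number `Φ`. -/
def PhiFactor (hmn : m ≤ n) (A : Matrix (Fin m) (Fin n) ℝ) (xstar sstar : Fin n → ℝ) : ℝ :=
  max (⨆ j : Fin (n - m),
        Real.sqrt ((∑ i, (BN hmn A i j) ^ 2) + 1) / sstar (nIdx hmn j))
      (⨆ i : Fin m,
        Real.sqrt ((∑ j, (BN hmn A i j) ^ 2) + 1) / xstar (bIdx hmn i))

/-- The geometric condition number `Φ`. -/
def Phi (hmn : m ≤ n) (A : Matrix (Fin m) (Fin n) ℝ) (xstar sstar : Fin n → ℝ) : ℝ :=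
  (l1 xstar + l1 sstar) * PhiFactor hmn A xstar sstar


/-- Slack-form dual feasibility: `s ∈ c + Im(Aᵀ)` and `s ≥ 0`. -/
def SlackFeasible (A : Matrix (Fin m) (Fin n) ℝ) (c : Fin n → ℝ) (s : Fin n → ℝ) : Prop :=
  (∃ y, s = c + Aᵀ *ᵥ y) ∧ ∀ i, 0 ≤ s i

/-- The duality gap `Gap(x,s) = cᵀx - qᵀ(c - s)`. -/
def Gap (A : Matrix (Fin m) (Fin n) ℝ) (b : Fin m → ℝ) (c : Fin n → ℝ)
    (x s : Fin n → ℝ) : ℝ :=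
  c ⬝ᵥ x - qvec A b ⬝ᵥ (c - s)

/-- The `δ`-sublevel set `W_δ ⊆ ℝⁿ × ℝⁿ` of primal-dual feasible pairs with gap at most `δ`. -/
def Wlev (A : Matrix (Fin m) (Fin n) ℝ) (b : Fin m → ℝ) (c : Fin n → ℝ) (δ : ℝ) :
    Set ((Fin n → ℝ) × (Fin n → ℝ)) :=
  {w | PrimalFeasible A b w.1 ∧ SlackFeasible A c w.2 ∧ Gap A b c w.1 w.2 ≤ δ}

/-- Euclidean norm on `ℝⁿ × ℝⁿ ≅ ℝ²ⁿ`. -/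
def pairNorm (w : (Fin n → ℝ) × (Fin n → ℝ)) : ℝ :=
  Real.sqrt ((∑ i, (w.1 i) ^ 2) + ∑ i, (w.2 i) ^ 2)

/-- The diameter `D_δ` of the sublevel set `W_δ`. -/
def Ddiam (A : Matrix (Fin m) (Fin n) ℝ) (b : Fin m → ℝ) (c : Fin n → ℝ) (δ : ℝ) : ℝ :=
  sSup {d | ∃ u ∈ Wlev A b c δ, ∃ v ∈ Wlev A b c δ, d = pairNorm (u - v)}

/-- The conic radius `r_δ` of the sublevel set `W_δ` (`min` over all `2n` coordinates). -/
def rrad (A : Matrix (Fin m) (Fin n) ℝ) (b : Fin m → ℝ) (c : Fin n → ℝ) (δ : ℝ) : ℝ :=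
  sSup {t | ∃ w ∈ Wlev A b c δ, t = min (⨅ i, w.1 i) (⨅ i, w.2 i)}

/-- The geometric condition number `Φ̂ := liminf_{δ → 0⁺} D_δ / r_δ`. -/
def PhiHat (A : Matrix (Fin m) (Fin n) ℝ) (b : Fin m → ℝ) (c : Fin n → ℝ) : ℝ :=
  Filter.liminf (fun δ => Ddiam A b c δ / rrad A b c δ) (nhdsWithin 0 (Set.Ioi (0:ℝ)))


/-! ### Auxiliary infrastructure -/

section Infra

variable {m n : ℕ}

def sumEquiv (hmn : m ≤ n) : (Fin m ⊕ Fin (n-m)) ≃ Fin n :=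
  finSumFinEquiv.trans (finCongr (Nat.add_sub_cancel' hmn))

lemma sumEquiv_inl (hmn : m ≤ n) (i : Fin m) : sumEquiv hmn (Sum.inl i) = bIdx hmn i := by
  simp [sumEquiv, bIdx, Fin.ext_iff]

lemma sumEquiv_inr (hmn : m ≤ n) (j : Fin (n-m)) : sumEquiv hmn (Sum.inr j) = nIdx hmn j := by
  simp [sumEquiv, nIdx, Fin.ext_iff]

lemma sum_split (hmn : m ≤ n) (f : Fin n → ℝ) :
    ∑ i, f i = (∑ i, f (bIdx hmn i)) + ∑ j, f (nIdx hmn j) := by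
  rw [← Equiv.sum_comp (sumEquiv hmn) f, Fintype.sum_sum_type]
  simp [sumEquiv_inl, sumEquiv_inr]

lemma funext_split {α : Type*} (hmn : m ≤ n) {f g : Fin n → α}
    (h1 : ∀ i, f (bIdx hmn i) = g (bIdx hmn i))
    (h2 : ∀ j, f (nIdx hmn j) = g (nIdx hmn j)) : f = g := by
  funext i
  obtain ⟨k, rfl⟩ := (sumEquiv hmn).surjective i
  cases k with
  | inl i => rw [sumEquiv_inl]; exact h1 i
  | inr j => rw [sumEquiv_inr]; exact h2 j

/-- Glue a basic part and a nonbasic part into a vector on `Fin n`. -/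
def glue (hmn : m ≤ n) (u : Fin m → ℝ) (v : Fin (n-m) → ℝ) : Fin n → ℝ :=
  fun i => Sum.elim u v ((sumEquiv hmn).symm i)

lemma glue_b (hmn : m ≤ n) (u : Fin m → ℝ) (v : Fin (n-m) → ℝ) (i : Fin m) :
    glue hmn u v (bIdx hmn i) = u i := by
  rw [glue, ← sumEquiv_inl hmn, Equiv.symm_apply_apply]; rfl

lemma glue_n (hmn : m ≤ n) (u : Fin m → ℝ) (v : Fin (n-m) → ℝ) (j : Fin (n-m)) :
    glue hmn u v (nIdx hmn j) = v j := by
  rw [glue, ← sumEquiv_inr hmn, Equiv.symm_apply_apply]; rfl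

lemma dot_split (hmn : m ≤ n) (u v : Fin n → ℝ) :
    u ⬝ᵥ v = (u ∘ bIdx hmn) ⬝ᵥ (v ∘ bIdx hmn) + (u ∘ nIdx hmn) ⬝ᵥ (v ∘ nIdx hmn) := by
  simpa [dotProduct, Function.comp] using sum_split hmn (fun i => u i * v i)

lemma mulVec_split (hmn : m ≤ n) (A : Matrix (Fin m) (Fin n) ℝ) (x : Fin n → ℝ) :
    A *ᵥ x = Bmat hmn A *ᵥ (x ∘ bIdx hmn) + Nmat hmn A *ᵥ (x ∘ nIdx hmn) := by
  funext i
  simpa [mulVec, dotProduct, Bmat, Nmat, Function.comp] using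
    sum_split hmn (fun k => A i k * x k)

lemma transpose_mulVec_b (hmn : m ≤ n) (A : Matrix (Fin m) (Fin n) ℝ) (y : Fin m → ℝ)
    (i : Fin m) : (Aᵀ *ᵥ y) (bIdx hmn i) = ((Bmat hmn A)ᵀ *ᵥ y) i := by
  simp [mulVec, dotProduct, Bmat, transpose]

lemma transpose_mulVec_n (hmn : m ≤ n) (A : Matrix (Fin m) (Fin n) ℝ) (y : Fin m → ℝ)
    (j : Fin (n-m)) : (Aᵀ *ᵥ y) (nIdx hmn j) = ((Nmat hmn A)ᵀ *ᵥ y) j := by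
  simp [mulVec, dotProduct, Nmat, transpose]

lemma isUnit_AAT (hmn : m ≤ n) (A : Matrix (Fin m) (Fin n) ℝ)
    (hB : IsUnit (Bmat hmn A).det) : IsUnit (A * Aᵀ).det := by
  rw [← isUnit_iff_isUnit_det, ← Matrix.mulVec_injective_iff_isUnit]
  intro y z hyz
  have key : ∀ w : Fin m → ℝ, (A * Aᵀ) *ᵥ w = 0 → w = 0 := by
    intro w hw
    have h1 : (Aᵀ *ᵥ w) ⬝ᵥ (Aᵀ *ᵥ w) = 0 := by
      have : w ⬝ᵥ ((A * Aᵀ) *ᵥ w) = 0 := by rw [hw]; simp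
      rw [← Matrix.mulVec_mulVec, Matrix.dotProduct_mulVec] at this
      rw [show w ᵥ* A = Aᵀ *ᵥ w from by
        rw [← Matrix.vecMul_transpose, Matrix.transpose_transpose]] at this
      exact this
    have h2 : Aᵀ *ᵥ w = 0 := by rwa [dotProduct_self_eq_zero] at h1
    have h3 : (Bmat hmn A)ᵀ *ᵥ w = 0 := by
      funext i
      have := congrFun h2 (bIdx hmn i)
      rwa [transpose_mulVec_b] at this
    have hBT : IsUnit ((Bmat hmn A)ᵀ).det := by rwa [Matrix.det_transpose]
    have := Matrix.mulVec_injective_iff_isUnit.mpr ((Matrix.isUnit_iff_isUnit_det _).mpr hBT)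
    exact this (by simpa using h3)
  have h0 : (A * Aᵀ) *ᵥ (y - z) = 0 := by rw [Matrix.mulVec_sub, hyz, sub_self]
  exact sub_eq_zero.mp (key _ h0)

def toE {k : Type*} [Fintype k] (v : k → ℝ) : EuclideanSpace ℝ k :=
  (WithLp.equiv 2 (k → ℝ)).symm v

lemma toE_sub {k : Type*} [Fintype k] (u v : k → ℝ) : toE (u - v) = toE u - toE v := rfl
lemma toE_smul {k : Type*} [Fintype k] (a : ℝ) (v : k → ℝ) : toE (a • v) = a • toE v := rfl
lemma toE_apply {k : Type*} [Fintype k] (v : k → ℝ) (i : k) : toE v i = v i := rfl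

lemma enorm_eq {k : Type*} [Fintype k] (v : k → ℝ) :
    Real.sqrt (∑ i, (v i) ^ 2) = ‖toE v‖ := by
  rw [EuclideanSpace.norm_eq]
  congr 1
  refine Finset.sum_congr rfl fun i _ => ?_
  rw [toE_apply, Real.norm_eq_abs, sq_abs]

lemma toE_sum {k : Type*} [Fintype k] {ι : Type*} (s : Finset ι) (f : ι → (k → ℝ)) :
    toE (∑ j ∈ s, f j) = ∑ j ∈ s, toE (f j) :=
  map_sum (WithLp.linearEquiv 2 ℝ (k → ℝ)).symm f s

lemma pairNorm_eq {n : ℕ} (w : (Fin n → ℝ) × (Fin n → ℝ)) :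
    pairNorm w = ‖toE (Sum.elim w.1 w.2)‖ := by
  rw [← enorm_eq, pairNorm, Fintype.sum_sum_type]
  simp

lemma sum_elim_sub {n : ℕ} (u v : (Fin n → ℝ) × (Fin n → ℝ)) :
    Sum.elim (u - v).1 (u - v).2 = Sum.elim u.1 u.2 - Sum.elim v.1 v.2 := by
  funext i; cases i <;> simp

lemma pairNorm_triangle {n : ℕ} (u v w : (Fin n → ℝ) × (Fin n → ℝ)) :
    pairNorm (u - v) ≤ pairNorm (u - w) + pairNorm (v - w) := by
  rw [pairNorm_eq, pairNorm_eq, pairNorm_eq, sum_elim_sub, sum_elim_sub, sum_elim_sub,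
    toE_sub, toE_sub, toE_sub]
  calc ‖toE (Sum.elim u.1 u.2) - toE (Sum.elim v.1 v.2)‖
      ≤ ‖toE (Sum.elim u.1 u.2) - toE (Sum.elim w.1 w.2)‖
        + ‖toE (Sum.elim w.1 w.2) - toE (Sum.elim v.1 v.2)‖ :=
      norm_sub_le_norm_sub_add_norm_sub _ _ _
    _ = _ := by rw [norm_sub_rev (toE (Sum.elim w.1 w.2))]

lemma pairNorm_le_add {n : ℕ} (w : (Fin n → ℝ) × (Fin n → ℝ)) :
    pairNorm w ≤ ‖toE w.1‖ + ‖toE w.2‖ := by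
  rw [pairNorm]
  have e1 : ∑ i, (w.1 i)^2 = ‖toE w.1‖^2 := by
    rw [← enorm_eq, Real.sq_sqrt]; positivity
  have e2 : ∑ i, (w.2 i)^2 = ‖toE w.2‖^2 := by
    rw [← enorm_eq, Real.sq_sqrt]; positivity
  rw [e1, e2]
  have h1 : (0:ℝ) ≤ ‖toE w.1‖ := norm_nonneg _
  have h2 : (0:ℝ) ≤ ‖toE w.2‖ := norm_nonneg _
  calc Real.sqrt (‖toE w.1‖^2 + ‖toE w.2‖^2)
      ≤ Real.sqrt ((‖toE w.1‖ + ‖toE w.2‖)^2) := Real.sqrt_le_sqrt (by nlinarith)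
    _ = _ := Real.sqrt_sq (by positivity)

lemma pairNorm_fst {n : ℕ} (x : Fin n → ℝ) : pairNorm (x, 0) = ‖toE x‖ := by
  rw [pairNorm]; simp [← enorm_eq]

lemma pairNorm_snd {n : ℕ} (s : Fin n → ℝ) : pairNorm (0, s) = ‖toE s‖ := by
  rw [pairNorm]; simp [← enorm_eq]

lemma exists_bound (K p : ℝ) (hp : 0 < p) :
    ∃ d, 0 < d ∧ ∀ δ : ℝ, 0 ≤ δ → δ ≤ d → δ * K ≤ p := by
  refine ⟨p / max K 1, by positivity, fun δ h0 hd => ?_⟩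
  have hK1 : (0:ℝ) < max K 1 := lt_of_lt_of_le one_pos (le_max_right _ _)
  calc δ * K ≤ δ * max K 1 := by
        exact mul_le_mul_of_nonneg_left (le_max_left _ _) h0
    _ ≤ (p / max K 1) * max K 1 := by
        exact mul_le_mul_of_nonneg_right hd (le_of_lt hK1)
    _ = p := div_mul_cancel₀ p (ne_of_gt hK1)

lemma forall_small {ι : Type*} [Finite ι] (P : ι → ℝ → Prop)
    (h : ∀ i, ∃ d, 0 < d ∧ ∀ δ : ℝ, 0 ≤ δ → δ ≤ d → P i δ) :
    ∃ d, 0 < d ∧ ∀ δ : ℝ, 0 ≤ δ → δ ≤ d → ∀ i, P i δ := by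
  cases isEmpty_or_nonempty ι with
  | inl hι => exact ⟨1, one_pos, fun δ _ _ i => (hι.false i).elim⟩
  | inr hι =>
    have : Fintype ι := Fintype.ofFinite ι
    choose f hf hP using h
    refine ⟨Finset.univ.inf' Finset.univ_nonempty f, ?_, fun δ h0 hd i => ?_⟩
    · exact (Finset.lt_inf'_iff _).mpr fun i _ => hf i
    · exact hP i δ h0 (le_trans hd (Finset.inf'_le _ (Finset.mem_univ i)))

lemma le_iSup_fin {k : ℕ} (f : Fin k → ℝ) (j : Fin k) : f j ≤ ⨆ i, f i :=
  le_ciSup (Set.Finite.bddAbove (Set.finite_range f)) j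

lemma min_iInf_eq {n : ℕ} (hn : 0 < n) (t : ℝ) (x s : Fin n → ℝ)
    (hx : ∀ i, t ≤ x i) (hs : ∀ i, t ≤ s i)
    (hex : (∃ i, x i = t) ∨ (∃ i, s i = t)) :
    min (⨅ i, x i) (⨅ i, s i) = t := by
  have : Nonempty (Fin n) := ⟨⟨0, hn⟩⟩
  have hxi : t ≤ ⨅ i, x i := le_ciInf hx
  have hsi : t ≤ ⨅ i, s i := le_ciInf hs
  rcases hex with ⟨i, hi⟩ | ⟨i, hi⟩
  · have : (⨅ i, x i) ≤ t := hi ▸ ciInf_le (Set.Finite.bddBelow (Set.finite_range x)) i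
    rw [min_eq_left (le_trans this hsi)]
    exact le_antisymm this hxi
  · have : (⨅ i, s i) ≤ t := hi ▸ ciInf_le (Set.Finite.bddBelow (Set.finite_range s)) i
    rw [min_eq_right (le_trans this hxi)]
    exact le_antisymm this hsi

end Infra


/-! ### LP structure lemmas -/

section LP

variable {m n : ℕ} {hmn : m ≤ n} {A : Matrix (Fin m) (Fin n) ℝ} {b : Fin m → ℝ} {c : Fin n → ℝ}
  {xstar : Fin n → ℝ} {ystar : Fin m → ℝ} {sstar : Fin n → ℝ}

lemma xstar_n (h : UniqueOpt hmn A b c xstar ystar sstar) (j : Fin (n-m)) :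
    xstar (nIdx hmn j) = 0 := by
  have h1 := h.primal_feas.2 (nIdx hmn j)
  have h2 := (h.xstar_supp (nIdx hmn j)).not.mpr (by simp [nIdx])
  exact le_antisymm (not_lt.mp h2) h1

lemma sstar_b (h : UniqueOpt hmn A b c xstar ystar sstar) (i : Fin m) :
    sstar (bIdx hmn i) = 0 := by
  have h1 := h.dual_feas.2 (bIdx hmn i)
  have h2 := (h.sstar_supp (bIdx hmn i)).not.mpr (by simp [bIdx])
  exact le_antisymm (not_lt.mp h2) h1

lemma xstar_b_pos (h : UniqueOpt hmn A b c xstar ystar sstar) (i : Fin m) :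
    0 < xstar (bIdx hmn i) := (h.xstar_supp (bIdx hmn i)).mpr (by simp [bIdx])

lemma sstar_n_pos (h : UniqueOpt hmn A b c xstar ystar sstar) (j : Fin (n-m)) :
    0 < sstar (nIdx hmn j) := (h.sstar_supp (nIdx hmn j)).mpr (by simp [nIdx])

lemma B_cancel (hB : IsUnit (Bmat hmn A).det) (u : Fin m → ℝ) :
    (Bmat hmn A)⁻¹ *ᵥ (Bmat hmn A *ᵥ u) = u := by
  rw [Matrix.mulVec_mulVec, Matrix.nonsing_inv_mul _ hB, Matrix.one_mulVec]

lemma BT_cancel (hB : IsUnit (Bmat hmn A).det) (u : Fin m → ℝ) :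
    ((Bmat hmn A)ᵀ)⁻¹ *ᵥ ((Bmat hmn A)ᵀ *ᵥ u) = u := by
  rw [Matrix.mulVec_mulVec, Matrix.nonsing_inv_mul _ (by rwa [Matrix.det_transpose]),
    Matrix.one_mulVec]

lemma B_mul_BN (hB : IsUnit (Bmat hmn A).det) :
    Bmat hmn A * BN hmn A = Nmat hmn A := by
  rw [BN, ← Matrix.mul_assoc, Matrix.mul_nonsing_inv _ hB, Matrix.one_mul]

lemma sstar_eq (h : UniqueOpt hmn A b c xstar ystar sstar) :
    sstar = c + Aᵀ *ᵥ (-ystar) := by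
  have := h.dual_feas.1
  rw [Matrix.mulVec_neg]
  rw [← this]; abel

/-- Basic part of a feasible primal point. -/
lemma primal_xB (h : UniqueOpt hmn A b c xstar ystar sstar) (x : Fin n → ℝ)
    (hx : A *ᵥ x = b) :
    x ∘ bIdx hmn = xstar ∘ bIdx hmn - BN hmn A *ᵥ (x ∘ nIdx hmn) := by
  have hB := h.basis_isUnit
  have hx0 : xstar ∘ nIdx hmn = 0 := by funext j; exact xstar_n h j
  have e0 : Bmat hmn A *ᵥ (xstar ∘ bIdx hmn) = b := by
    have := h.primal_feas.1
    rw [mulVec_split hmn A xstar, hx0] at this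
    simpa using this
  have e1 : Bmat hmn A *ᵥ (x ∘ bIdx hmn) =
      Bmat hmn A *ᵥ (xstar ∘ bIdx hmn) - Nmat hmn A *ᵥ (x ∘ nIdx hmn) := by
    rw [e0, eq_sub_iff_add_eq, ← mulVec_split hmn A x, hx]
  calc x ∘ bIdx hmn = (Bmat hmn A)⁻¹ *ᵥ (Bmat hmn A *ᵥ (x ∘ bIdx hmn)) := (B_cancel hB _).symm
    _ = xstar ∘ bIdx hmn - BN hmn A *ᵥ (x ∘ nIdx hmn) := by
        rw [e1, Matrix.mulVec_sub, B_cancel hB, BN, ← Matrix.mulVec_mulVec]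

/-- Slack decomposition: `s = s* + Aᵀ z` for `z = y + y*`. -/
lemma slack_z (h : UniqueOpt hmn A b c xstar ystar sstar) (s : Fin n → ℝ) (y : Fin m → ℝ)
    (hs : s = c + Aᵀ *ᵥ y) : s = sstar + Aᵀ *ᵥ (y + ystar) := by
  rw [hs, sstar_eq h, Matrix.mulVec_add, Matrix.mulVec_neg]
  abel

lemma slack_sB (h : UniqueOpt hmn A b c xstar ystar sstar) (s : Fin n → ℝ) (z : Fin m → ℝ)
    (hs : s = sstar + Aᵀ *ᵥ z) : s ∘ bIdx hmn = (Bmat hmn A)ᵀ *ᵥ z := by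
  funext i
  rw [Function.comp_apply, hs, Pi.add_apply, sstar_b h, transpose_mulVec_b, zero_add]

lemma slack_sN (h : UniqueOpt hmn A b c xstar ystar sstar) (s : Fin n → ℝ) (z : Fin m → ℝ)
    (hs : s = sstar + Aᵀ *ᵥ z) :
    s ∘ nIdx hmn = sstar ∘ nIdx hmn + (BN hmn A)ᵀ *ᵥ (s ∘ bIdx hmn) := by
  have hB := h.basis_isUnit
  have hz : s ∘ bIdx hmn = (Bmat hmn A)ᵀ *ᵥ z := slack_sB h s z hs
  have key : (BN hmn A)ᵀ *ᵥ (s ∘ bIdx hmn) = (Nmat hmn A)ᵀ *ᵥ z := by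
    rw [hz, BN, Matrix.transpose_mul, Matrix.transpose_nonsing_inv, Matrix.mulVec_mulVec,
      Matrix.mul_assoc, Matrix.nonsing_inv_mul _ (by rwa [Matrix.det_transpose]), Matrix.mul_one]
  rw [key]
  funext j
  rw [Function.comp_apply, hs, Pi.add_apply, Pi.add_apply, Function.comp_apply,
    transpose_mulVec_n]

lemma Aq_eq (h : UniqueOpt hmn A b c xstar ystar sstar) : A *ᵥ qvec A b = b := by
  rw [qvec, Matrix.mulVec_mulVec, Matrix.mulVec_mulVec,
    Matrix.mul_nonsing_inv _ (isUnit_AAT hmn A h.basis_isUnit), Matrix.one_mulVec]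

lemma gap_eq_dot (h : UniqueOpt hmn A b c xstar ystar sstar) (x s : Fin n → ℝ)
    (y : Fin m → ℝ) (hx : A *ᵥ x = b) (hs : s = c + Aᵀ *ᵥ y) :
    Gap A b c x s = x ⬝ᵥ s := by
  have hcs : c - s = -(Aᵀ *ᵥ y) := by rw [hs]; abel
  have h1 : qvec A b ⬝ᵥ (c - s) = -(b ⬝ᵥ y) := by
    rw [hcs, dotProduct_neg, Matrix.dotProduct_mulVec, Matrix.vecMul_transpose,
      Aq_eq h]
  have h2 : c ⬝ᵥ x = x ⬝ᵥ s - b ⬝ᵥ y := by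
    have hc : c = s - Aᵀ *ᵥ y := by rw [hs]; abel
    rw [hc, sub_dotProduct, dotProduct_comm s x]
    congr 1
    rw [← hx, dotProduct_comm, Matrix.dotProduct_mulVec, Matrix.vecMul_transpose]
  rw [Gap, h1, h2]; ring

lemma xstar_dot_sstar (h : UniqueOpt hmn A b c xstar ystar sstar) :
    xstar ⬝ᵥ sstar = 0 := by
  rw [dot_split hmn]
  have e1 : (xstar ∘ bIdx hmn) ⬝ᵥ (sstar ∘ bIdx hmn) = 0 := by
    apply Finset.sum_eq_zero; intro i _
    simp [Function.comp, sstar_b h]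
  have e2 : (xstar ∘ nIdx hmn) ⬝ᵥ (sstar ∘ nIdx hmn) = 0 := by
    apply Finset.sum_eq_zero; intro j _
    simp [Function.comp, xstar_n h]
  rw [e1, e2, add_zero]

lemma gap_split_dot (h : UniqueOpt hmn A b c xstar ystar sstar) (x s : Fin n → ℝ)
    (z : Fin m → ℝ) (hx : A *ᵥ x = b) (hs : s = sstar + Aᵀ *ᵥ z) :
    x ⬝ᵥ s = x ⬝ᵥ sstar + xstar ⬝ᵥ s := by
  have horth : (x - xstar) ⬝ᵥ (s - sstar) = 0 := by
    have hss : s - sstar = Aᵀ *ᵥ z := by rw [hs]; abel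
    rw [hss, Matrix.dotProduct_mulVec, Matrix.vecMul_transpose, Matrix.mulVec_sub, hx,
      h.primal_feas.1, sub_self, zero_dotProduct]
  have expand : (x - xstar) ⬝ᵥ (s - sstar) =
      x ⬝ᵥ s - x ⬝ᵥ sstar - xstar ⬝ᵥ s + xstar ⬝ᵥ sstar := by
    rw [sub_dotProduct, dotProduct_sub, dotProduct_sub]; ring
  have h0 := xstar_dot_sstar h
  rw [expand, h0] at horth
  linarith

lemma dot_sstar_eq (h : UniqueOpt hmn A b c xstar ystar sstar) (x : Fin n → ℝ) :
    x ⬝ᵥ sstar = ∑ j, x (nIdx hmn j) * sstar (nIdx hmn j) := by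
  rw [dot_split hmn]
  have e1 : (x ∘ bIdx hmn) ⬝ᵥ (sstar ∘ bIdx hmn) = 0 := by
    apply Finset.sum_eq_zero; intro i _
    simp [Function.comp, sstar_b h]
  rw [e1, zero_add]
  rfl

lemma xstar_dot_eq (h : UniqueOpt hmn A b c xstar ystar sstar) (s : Fin n → ℝ) :
    xstar ⬝ᵥ s = ∑ i, xstar (bIdx hmn i) * s (bIdx hmn i) := by
  rw [dot_split hmn]
  have e2 : (xstar ∘ nIdx hmn) ⬝ᵥ (s ∘ nIdx hmn) = 0 := by
    apply Finset.sum_eq_zero; intro j _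
    simp [Function.comp, xstar_n h]
  rw [e2, add_zero]
  rfl

lemma l1_xstar (h : UniqueOpt hmn A b c xstar ystar sstar) :
    l1 xstar = ∑ i, xstar (bIdx hmn i) := by
  rw [l1, sum_split hmn]
  have e2 : ∑ j, |xstar (nIdx hmn j)| = 0 := by
    apply Finset.sum_eq_zero; intro j _; simp [xstar_n h]
  rw [e2, add_zero]
  exact Finset.sum_congr rfl fun i _ => abs_of_pos (xstar_b_pos h i)

lemma l1_sstar (h : UniqueOpt hmn A b c xstar ystar sstar) :
    l1 sstar = ∑ j, sstar (nIdx hmn j) := by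
  rw [l1, sum_split hmn]
  have e1 : ∑ i, |sstar (bIdx hmn i)| = 0 := by
    apply Finset.sum_eq_zero; intro i _; simp [sstar_b h]
  rw [e1, zero_add]
  exact Finset.sum_congr rfl fun j _ => abs_of_pos (sstar_n_pos h j)

end LP


/-! ### Direction vectors and distance bound -/

section Dist

variable {m n : ℕ} {hmn : m ≤ n} {A : Matrix (Fin m) (Fin n) ℝ} {b : Fin m → ℝ} {c : Fin n → ℝ}
  {xstar : Fin n → ℝ} {ystar : Fin m → ℝ} {sstar : Fin n → ℝ}

/-- Edge direction associated with nonbasic index `j`. -/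
def colV (hmn : m ≤ n) (A : Matrix (Fin m) (Fin n) ℝ) (j : Fin (n-m)) : Fin n → ℝ :=
  glue hmn (fun i => -(BN hmn A i j)) (fun j' => if j' = j then 1 else 0)

/-- Edge direction associated with basic index `i`. -/
def rowV (hmn : m ≤ n) (A : Matrix (Fin m) (Fin n) ℝ) (i : Fin m) : Fin n → ℝ :=
  glue hmn (fun i' => if i' = i then 1 else 0) (fun j => BN hmn A i j)

lemma norm_colV (j : Fin (n-m)) :
    ‖toE (colV hmn A j)‖ = Real.sqrt ((∑ i, (BN hmn A i j)^2) + 1) := by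
  rw [← enorm_eq]
  congr 1
  rw [sum_split hmn]
  congr 1
  · exact Finset.sum_congr rfl fun i _ => by rw [colV, glue_b]; ring
  · have : ∀ j' : Fin (n-m), colV hmn A j (nIdx hmn j') ^ 2 = if j' = j then (1:ℝ) else 0 := by
      intro j'
      rw [colV, glue_n]
      by_cases hj : j' = j <;> simp [hj]
    rw [Finset.sum_congr rfl fun j' _ => this j']
    simp

lemma norm_rowV (i : Fin m) :
    ‖toE (rowV hmn A i)‖ = Real.sqrt ((∑ j, (BN hmn A i j)^2) + 1) := by
  rw [← enorm_eq]
  congr 1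
  rw [sum_split hmn, add_comm]
  congr 1
  · exact Finset.sum_congr rfl fun j _ => by rw [rowV, glue_n]
  · have : ∀ i' : Fin m, rowV hmn A i (bIdx hmn i') ^ 2 = if i' = i then (1:ℝ) else 0 := by
      intro i'
      rw [rowV, glue_b]
      by_cases hi : i' = i <;> simp [hi]
    rw [Finset.sum_congr rfl fun i' _ => this i']
    simp

lemma A_colV (hB : IsUnit (Bmat hmn A).det) (j : Fin (n-m)) :
    A *ᵥ colV hmn A j = 0 := by
  rw [mulVec_split hmn]
  have e1 : colV hmn A j ∘ bIdx hmn = fun i => -(BN hmn A i j) := by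
    funext i; exact glue_b hmn _ _ i
  have e2 : colV hmn A j ∘ nIdx hmn = fun j' => if j' = j then 1 else 0 := by
    funext j'; exact glue_n hmn _ _ j'
  rw [e1, e2]
  funext i
  have hN : (Nmat hmn A *ᵥ fun j' => if j' = j then (1:ℝ) else 0) i = Nmat hmn A i j := by
    simp [mulVec, dotProduct, mul_ite]
  have hBv : (Bmat hmn A *ᵥ fun i' => -(BN hmn A i' j)) i = -(Nmat hmn A i j) := by
    have : (Bmat hmn A *ᵥ fun i' => BN hmn A i' j) i = (Bmat hmn A * BN hmn A) i j := by
      simp [mulVec, dotProduct, Matrix.mul_apply]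
    calc (Bmat hmn A *ᵥ fun i' => -(BN hmn A i' j)) i
        = -((Bmat hmn A *ᵥ fun i' => BN hmn A i' j) i) := by
          simp [mulVec, dotProduct, ← Finset.sum_neg_distrib]
      _ = -(Nmat hmn A i j) := by rw [this, B_mul_BN hB]
  simp [hBv, hN]

/-- `x - x* = ∑ⱼ x_N(j) • colV j` for primal-feasible `x`. -/
lemma x_decomp (h : UniqueOpt hmn A b c xstar ystar sstar) (x : Fin n → ℝ)
    (hx : A *ᵥ x = b) :
    x - xstar = ∑ j, x (nIdx hmn j) • colV hmn A j := by
  have hxB := primal_xB h x hx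
  refine funext_split hmn (fun i => ?_) (fun j' => ?_)
  · have lhs : (x - xstar) (bIdx hmn i) = -((BN hmn A *ᵥ (x ∘ nIdx hmn)) i) := by
      have := congrFun hxB i
      simp only [Function.comp_apply, Pi.sub_apply] at this ⊢
      rw [this]; ring
    rw [lhs, Finset.sum_apply]
    simp only [Pi.smul_apply, smul_eq_mul, colV, glue_b]
    rw [mulVec, dotProduct]
    rw [← Finset.sum_neg_distrib]
    exact Finset.sum_congr rfl fun j _ => by simp [Function.comp]; ring
  · rw [Finset.sum_apply]
    simp only [Pi.smul_apply, smul_eq_mul, colV, glue_n]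
    rw [Pi.sub_apply, xstar_n h, sub_zero]
    simp [mul_ite]

/-- `s - s* = ∑ᵢ s_B(i) • rowV i` for slack-feasible `s`. -/
lemma s_decomp (h : UniqueOpt hmn A b c xstar ystar sstar) (s : Fin n → ℝ)
    (z : Fin m → ℝ) (hs : s = sstar + Aᵀ *ᵥ z) :
    s - sstar = ∑ i, s (bIdx hmn i) • rowV hmn A i := by
  have hsN := slack_sN h s z hs
  refine funext_split hmn (fun i' => ?_) (fun j => ?_)
  · rw [Pi.sub_apply, sstar_b h, sub_zero, Finset.sum_apply]
    simp only [Pi.smul_apply, smul_eq_mul, rowV, glue_b]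
    simp [mul_ite]
  · have := congrFun hsN j
    simp only [Function.comp_apply, Pi.add_apply] at this
    rw [Pi.sub_apply, this]
    rw [Finset.sum_apply]
    simp only [Pi.smul_apply, smul_eq_mul, rowV, glue_n]
    rw [add_sub_cancel_left, mulVec, dotProduct]
    exact Finset.sum_congr rfl fun i _ => by
      simp [Matrix.transpose_apply, Function.comp]; ring

/-- First component of `PhiFactor`. -/
def M1 (hmn : m ≤ n) (A : Matrix (Fin m) (Fin n) ℝ) (sstar : Fin n → ℝ) : ℝ :=
  ⨆ j : Fin (n - m), Real.sqrt ((∑ i, (BN hmn A i j) ^ 2) + 1) / sstar (nIdx hmn j)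

/-- Second component of `PhiFactor`. -/
def M2 (hmn : m ≤ n) (A : Matrix (Fin m) (Fin n) ℝ) (xstar : Fin n → ℝ) : ℝ :=
  ⨆ i : Fin m, Real.sqrt ((∑ j, (BN hmn A i j) ^ 2) + 1) / xstar (bIdx hmn i)

lemma PhiFactor_eq : PhiFactor hmn A xstar sstar = max (M1 hmn A sstar) (M2 hmn A xstar) := rfl

lemma M1_nonneg (h : UniqueOpt hmn A b c xstar ystar sstar) : 0 ≤ M1 hmn A sstar := by
  cases isEmpty_or_nonempty (Fin (n - m)) with
  | inl he => rw [M1, Real.iSup_of_isEmpty]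
  | inr hne =>
    obtain ⟨j⟩ := hne
    refine le_trans (div_nonneg (Real.sqrt_nonneg _) (le_of_lt (sstar_n_pos h j)))
      (le_iSup_fin (fun j => Real.sqrt ((∑ i, (BN hmn A i j) ^ 2) + 1) / sstar (nIdx hmn j)) j)

lemma M2_nonneg (h : UniqueOpt hmn A b c xstar ystar sstar) : 0 ≤ M2 hmn A xstar := by
  cases isEmpty_or_nonempty (Fin m) with
  | inl he => rw [M2, Real.iSup_of_isEmpty]
  | inr hne =>
    obtain ⟨i⟩ := hne
    refine le_trans (div_nonneg (Real.sqrt_nonneg _) (le_of_lt (xstar_b_pos h i)))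
      (le_iSup_fin (fun i => Real.sqrt ((∑ j, (BN hmn A i j) ^ 2) + 1) / xstar (bIdx hmn i)) i)

/-- The central distance estimate. -/
lemma dist_bound (h : UniqueOpt hmn A b c xstar ystar sstar) (x s : Fin n → ℝ)
    (hx : PrimalFeasible A b x) (z : Fin m → ℝ) (hs : s = sstar + Aᵀ *ᵥ z)
    (hsn : ∀ i, 0 ≤ s i) :
    pairNorm ((x, s) - (xstar, sstar)) ≤
      (x ⬝ᵥ sstar) * M1 hmn A sstar + (xstar ⬝ᵥ s) * M2 hmn A xstar := by
  have hb1 : pairNorm ((x, s) - (xstar, sstar)) ≤ ‖toE (x - xstar)‖ + ‖toE (s - sstar)‖ :=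
    pairNorm_le_add _
  have hx1 : ‖toE (x - xstar)‖ ≤ (x ⬝ᵥ sstar) * M1 hmn A sstar := by
    rw [x_decomp h x hx.1, toE_sum]
    refine le_trans (norm_sum_le _ _) ?_
    rw [dot_sstar_eq h x, Finset.sum_mul]
    refine Finset.sum_le_sum fun j _ => ?_
    rw [show toE (x (nIdx hmn j) • colV hmn A j) = x (nIdx hmn j) • toE (colV hmn A j) from rfl,
      norm_smul, Real.norm_eq_abs, abs_of_nonneg (hx.2 _), norm_colV]
    have hspos := sstar_n_pos h j
    have hM : Real.sqrt ((∑ i, (BN hmn A i j) ^ 2) + 1) / sstar (nIdx hmn j)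
        ≤ M1 hmn A sstar :=
      le_iSup_fin (fun j => Real.sqrt ((∑ i, (BN hmn A i j) ^ 2) + 1) / sstar (nIdx hmn j)) j
    have key : x (nIdx hmn j) * Real.sqrt ((∑ i, (BN hmn A i j) ^ 2) + 1)
        = (x (nIdx hmn j) * sstar (nIdx hmn j)) *
          (Real.sqrt ((∑ i, (BN hmn A i j) ^ 2) + 1) / sstar (nIdx hmn j)) := by
      field_simp
    rw [key]
    exact mul_le_mul_of_nonneg_left hM (mul_nonneg (hx.2 _) (le_of_lt hspos))
  have hs1 : ‖toE (s - sstar)‖ ≤ (xstar ⬝ᵥ s) * M2 hmn A xstar := by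
    rw [s_decomp h s z hs, toE_sum]
    refine le_trans (norm_sum_le _ _) ?_
    rw [xstar_dot_eq h s, Finset.sum_mul]
    refine Finset.sum_le_sum fun i _ => ?_
    rw [show toE (s (bIdx hmn i) • rowV hmn A i) = s (bIdx hmn i) • toE (rowV hmn A i) from rfl,
      norm_smul, Real.norm_eq_abs, abs_of_nonneg (hsn _), norm_rowV]
    have hxpos := xstar_b_pos h i
    have hM : Real.sqrt ((∑ j, (BN hmn A i j) ^ 2) + 1) / xstar (bIdx hmn i)
        ≤ M2 hmn A xstar :=
      le_iSup_fin (fun i => Real.sqrt ((∑ j, (BN hmn A i j) ^ 2) + 1) / xstar (bIdx hmn i)) i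
    have key : s (bIdx hmn i) * Real.sqrt ((∑ j, (BN hmn A i j) ^ 2) + 1)
        = (xstar (bIdx hmn i) * s (bIdx hmn i)) *
          (Real.sqrt ((∑ j, (BN hmn A i j) ^ 2) + 1) / xstar (bIdx hmn i)) := by
      field_simp
    rw [key]
    exact mul_le_mul_of_nonneg_left hM (mul_nonneg (le_of_lt hxpos) (hsn _))
  calc pairNorm ((x, s) - (xstar, sstar)) ≤ ‖toE (x - xstar)‖ + ‖toE (s - sstar)‖ := hb1
    _ ≤ _ := add_le_add hx1 hs1

end Dist


/-! ### Membership lemmas -/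

section Mem

variable {m n : ℕ} {hmn : m ≤ n} {A : Matrix (Fin m) (Fin n) ℝ} {b : Fin m → ℝ} {c : Fin n → ℝ}
  {xstar : Fin n → ℝ} {ystar : Fin m → ℝ} {sstar : Fin n → ℝ}

lemma forall_split (hmn : m ≤ n) (P : Fin n → Prop)
    (h1 : ∀ i, P (bIdx hmn i)) (h2 : ∀ j, P (nIdx hmn j)) : ∀ i, P i := by
  intro i
  obtain ⟨k, rfl⟩ := (sumEquiv hmn).surjective i
  cases k with
  | inl i => rw [sumEquiv_inl]; exact h1 i
  | inr j => rw [sumEquiv_inr]; exact h2 j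

lemma dot_sstar_nonneg (h : UniqueOpt hmn A b c xstar ystar sstar) (x : Fin n → ℝ)
    (hx : ∀ i, 0 ≤ x i) : 0 ≤ x ⬝ᵥ sstar := by
  rw [dot_sstar_eq h]
  exact Finset.sum_nonneg fun j _ => mul_nonneg (hx _) (sstar_n_pos h j).le

lemma xstar_dot_nonneg (h : UniqueOpt hmn A b c xstar ystar sstar) (s : Fin n → ℝ)
    (hs : ∀ i, 0 ≤ s i) : 0 ≤ xstar ⬝ᵥ s := by
  rw [xstar_dot_eq h]
  exact Finset.sum_nonneg fun i _ => mul_nonneg (xstar_b_pos h i).le (hs _)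

lemma BxB (h : UniqueOpt hmn A b c xstar ystar sstar) :
    Bmat hmn A *ᵥ (xstar ∘ bIdx hmn) = b := by
  have hx0 : xstar ∘ nIdx hmn = 0 := by funext j; exact xstar_n h j
  have := h.primal_feas.1
  rw [mulVec_split hmn A xstar, hx0] at this
  simpa using this

lemma sstar_slack (h : UniqueOpt hmn A b c xstar ystar sstar) :
    SlackFeasible A c sstar :=
  ⟨⟨-ystar, sstar_eq h⟩, h.dual_feas.2⟩

lemma wstar_mem (h : UniqueOpt hmn A b c xstar ystar sstar) {δ : ℝ} (hδ : 0 ≤ δ) :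
    (xstar, sstar) ∈ Wlev A b c δ := by
  refine ⟨h.primal_feas, sstar_slack h, ?_⟩
  rw [Gap, show c - sstar = -(Aᵀ *ᵥ (-ystar)) from by rw [sstar_eq h]; abel]
  have : Gap A b c xstar sstar = xstar ⬝ᵥ sstar :=
    gap_eq_dot h xstar sstar (-ystar) h.primal_feas.1 (sstar_eq h)
  rw [Gap] at this
  rw [show c - sstar = -(Aᵀ *ᵥ (-ystar)) from by rw [sstar_eq h]; abel] at this
  rw [this, xstar_dot_sstar h]
  exact hδ

lemma PhiFactor_nonneg (h : UniqueOpt hmn A b c xstar ystar sstar) :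
    0 ≤ PhiFactor hmn A xstar sstar :=
  le_trans (M1_nonneg h) (le_max_left _ _)

/-- Every point of the sublevel set is within `δ·Φf` of `(x*, s*)`. -/
lemma mem_dist (h : UniqueOpt hmn A b c xstar ystar sstar) {δ : ℝ} (hδ : 0 ≤ δ)
    {w : (Fin n → ℝ) × (Fin n → ℝ)} (hw : w ∈ Wlev A b c δ) :
    pairNorm (w - (xstar, sstar)) ≤ δ * PhiFactor hmn A xstar sstar := by
  obtain ⟨hp, ⟨⟨y, hy⟩, hsn⟩, hgap⟩ := hw
  have hs : w.2 = sstar + Aᵀ *ᵥ (y + ystar) := slack_z h _ y hy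
  have hd : pairNorm ((w.1, w.2) - (xstar, sstar)) ≤
      (w.1 ⬝ᵥ sstar) * M1 hmn A sstar + (xstar ⬝ᵥ w.2) * M2 hmn A xstar :=
    dist_bound h w.1 w.2 hp (y + ystar) hs hsn
  have hgap' : w.1 ⬝ᵥ sstar + xstar ⬝ᵥ w.2 ≤ δ := by
    have e1 : Gap A b c w.1 w.2 = w.1 ⬝ᵥ w.2 := gap_eq_dot h w.1 w.2 y hp.1 hy
    have e2 : w.1 ⬝ᵥ w.2 = w.1 ⬝ᵥ sstar + xstar ⬝ᵥ w.2 := gap_split_dot h w.1 w.2 _ hp.1 hs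
    rw [← e2, ← e1]; exact hgap
  have h1 : (w.1 ⬝ᵥ sstar) * M1 hmn A sstar ≤ (w.1 ⬝ᵥ sstar) * PhiFactor hmn A xstar sstar :=
    mul_le_mul_of_nonneg_left (le_max_left _ _) (dot_sstar_nonneg h w.1 hp.2)
  have h2 : (xstar ⬝ᵥ w.2) * M2 hmn A xstar ≤ (xstar ⬝ᵥ w.2) * PhiFactor hmn A xstar sstar :=
    mul_le_mul_of_nonneg_left (le_max_right _ _) (xstar_dot_nonneg h w.2 hsn)
  have h3 : (w.1 ⬝ᵥ sstar + xstar ⬝ᵥ w.2) * PhiFactor hmn A xstar sstar ≤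
      δ * PhiFactor hmn A xstar sstar :=
    mul_le_mul_of_nonneg_right hgap' (PhiFactor_nonneg h)
  calc pairNorm (w - (xstar, sstar)) = pairNorm ((w.1, w.2) - (xstar, sstar)) := by rw [Prod.mk.eta]
    _ ≤ (w.1 ⬝ᵥ sstar) * M1 hmn A sstar + (xstar ⬝ᵥ w.2) * M2 hmn A xstar := hd
    _ ≤ (w.1 ⬝ᵥ sstar + xstar ⬝ᵥ w.2) * PhiFactor hmn A xstar sstar := by
        rw [add_mul]; exact add_le_add h1 h2
    _ ≤ δ * PhiFactor hmn A xstar sstar := h3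

/-- Gap of a constructed pair. -/
lemma gap_constructed (h : UniqueOpt hmn A b c xstar ystar sstar) (x s : Fin n → ℝ)
    (z : Fin m → ℝ) (hx : A *ᵥ x = b) (hs : s = sstar + Aᵀ *ᵥ z) :
    Gap A b c x s = x ⬝ᵥ sstar + xstar ⬝ᵥ s := by
  have hsf : s = c + Aᵀ *ᵥ (z - ystar) := by
    rw [hs, sstar_eq h, Matrix.mulVec_sub, Matrix.mulVec_neg]; abel
  rw [gap_eq_dot h x s (z - ystar) hx hsf]
  exact gap_split_dot h x s z hx hs

lemma slack_of_z (h : UniqueOpt hmn A b c xstar ystar sstar) (s : Fin n → ℝ)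
    (z : Fin m → ℝ) (hs : s = sstar + Aᵀ *ᵥ z) (hsn : ∀ i, 0 ≤ s i) :
    SlackFeasible A c s := by
  refine ⟨⟨z - ystar, ?_⟩, hsn⟩
  rw [hs, sstar_eq h, Matrix.mulVec_sub, Matrix.mulVec_neg]; abel

end Mem


/-! ### Diameter bounds -/

section Diam

variable {m n : ℕ} {hmn : m ≤ n} {A : Matrix (Fin m) (Fin n) ℝ} {b : Fin m → ℝ} {c : Fin n → ℝ}
  {xstar : Fin n → ℝ} {ystar : Fin m → ℝ} {sstar : Fin n → ℝ}

lemma diam_upper (h : UniqueOpt hmn A b c xstar ystar sstar) {δ : ℝ} (hδ : 0 ≤ δ) :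
    Ddiam A b c δ ≤ 2 * (δ * PhiFactor hmn A xstar sstar) := by
  apply Real.sSup_le
  · rintro d ⟨u, hu, v, hv, rfl⟩
    calc pairNorm (u - v)
        ≤ pairNorm (u - (xstar, sstar)) + pairNorm (v - (xstar, sstar)) :=
          pairNorm_triangle u v (xstar, sstar)
      _ ≤ δ * PhiFactor hmn A xstar sstar + δ * PhiFactor hmn A xstar sstar :=
          add_le_add (mem_dist h hδ hu) (mem_dist h hδ hv)
      _ = 2 * (δ * PhiFactor hmn A xstar sstar) := by ring
  · have := PhiFactor_nonneg h
    positivity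

lemma diam_bddAbove (h : UniqueOpt hmn A b c xstar ystar sstar) {δ : ℝ} (hδ : 0 ≤ δ) :
    BddAbove {d | ∃ u ∈ Wlev A b c δ, ∃ v ∈ Wlev A b c δ, d = pairNorm (u - v)} := by
  refine ⟨2 * (δ * PhiFactor hmn A xstar sstar), ?_⟩
  rintro d ⟨u, hu, v, hv, rfl⟩
  calc pairNorm (u - v)
      ≤ pairNorm (u - (xstar, sstar)) + pairNorm (v - (xstar, sstar)) :=
        pairNorm_triangle u v (xstar, sstar)
    _ ≤ δ * PhiFactor hmn A xstar sstar + δ * PhiFactor hmn A xstar sstar :=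
        add_le_add (mem_dist h hδ hu) (mem_dist h hδ hv)
    _ = 2 * (δ * PhiFactor hmn A xstar sstar) := by ring

lemma pairNorm_zero {k : ℕ} : pairNorm (0 : (Fin k → ℝ) × (Fin k → ℝ)) = 0 := by
  simp [pairNorm]

lemma diam_lower (h : UniqueOpt hmn A b c xstar ystar sstar) {δ : ℝ} (hδ : 0 ≤ δ)
    (hd3 : ∀ p : Fin m × Fin (n-m),
      δ * (BN hmn A p.1 p.2 / sstar (nIdx hmn p.2)) ≤ xstar (bIdx hmn p.1))
    (hd4 : ∀ p : Fin m × Fin (n-m),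
      δ * (-(BN hmn A p.1 p.2) / xstar (bIdx hmn p.1)) ≤ sstar (nIdx hmn p.2)) :
    δ * PhiFactor hmn A xstar sstar ≤ Ddiam A b c δ := by
  have hbdd := diam_bddAbove h hδ
  have hzero : (0:ℝ) ∈ {d | ∃ u ∈ Wlev A b c δ, ∃ v ∈ Wlev A b c δ, d = pairNorm (u - v)} :=
    ⟨(xstar, sstar), wstar_mem h hδ, (xstar, sstar), wstar_mem h hδ, by
      rw [sub_self, pairNorm_zero]⟩
  have hmem : δ * PhiFactor hmn A xstar sstar ∈
      {d | ∃ u ∈ Wlev A b c δ, ∃ v ∈ Wlev A b c δ, d = pairNorm (u - v)} := by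
    rw [PhiFactor_eq]
    rcases le_total (M2 hmn A xstar) (M1 hmn A sstar) with hM | hM
    · rw [max_eq_left hM]
      cases isEmpty_or_nonempty (Fin (n - m)) with
      | inl he =>
        have : M1 hmn A sstar = 0 := by rw [M1, Real.iSup_of_isEmpty]
        rw [this, mul_zero]
        exact hzero
      | inr hne =>
        obtain ⟨j', hj'⟩ := Finite.exists_max
          (fun j => Real.sqrt ((∑ i, (BN hmn A i j) ^ 2) + 1) / sstar (nIdx hmn j))
        have hM1 : M1 hmn A sstar
            = Real.sqrt ((∑ i, (BN hmn A i j') ^ 2) + 1) / sstar (nIdx hmn j') := by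
          rw [M1]
          exact le_antisymm (ciSup_le hj') (le_iSup_fin
            (fun j => Real.sqrt ((∑ i, (BN hmn A i j) ^ 2) + 1) / sstar (nIdx hmn j)) j')
        set τ := δ / sstar (nIdx hmn j') with hτdef
        have hsp := sstar_n_pos h j'
        have hτ0 : 0 ≤ τ := div_nonneg hδ hsp.le
        set ux := xstar + τ • colV hmn A j' with huxdef
        have huxb : ∀ i, ux (bIdx hmn i) = xstar (bIdx hmn i) - τ * BN hmn A i j' := by
          intro i
          rw [huxdef, Pi.add_apply, Pi.smul_apply, smul_eq_mul, colV, glue_b]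
          ring
        have huxn : ∀ j, ux (nIdx hmn j) = τ * (if j = j' then 1 else 0) := by
          intro j
          rw [huxdef, Pi.add_apply, Pi.smul_apply, smul_eq_mul, colV, glue_n, xstar_n h,
            zero_add]
        have huxpos : ∀ i, 0 ≤ ux i := by
          refine forall_split hmn _ (fun i => ?_) (fun j => ?_)
          · rw [huxb i]
            have := hd3 (i, j')
            have hτBN : τ * BN hmn A i j' = δ * (BN hmn A i j' / sstar (nIdx hmn j')) := by
              rw [hτdef]; ring
            simp only at this
            linarith [hτBN ▸ this]
          · rw [huxn j]
            positivity
        have hAux : A *ᵥ ux = b := by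
          rw [huxdef, Matrix.mulVec_add, Matrix.mulVec_smul, A_colV h.basis_isUnit,
            smul_zero, add_zero, h.primal_feas.1]
        have hgap : Gap A b c ux sstar = δ := by
          rw [gap_constructed h ux sstar 0 hAux (by simp), xstar_dot_sstar h, add_zero,
            dot_sstar_eq h]
          have : ∀ j, ux (nIdx hmn j) * sstar (nIdx hmn j)
              = if j = j' then τ * sstar (nIdx hmn j') else 0 := by
            intro j
            rw [huxn j]
            by_cases hj : j = j' <;> simp [hj]
          rw [Finset.sum_congr rfl fun j _ => this j, Finset.sum_ite_eq' Finset.univ j']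
          simp [hτdef, div_mul_cancel₀ _ (ne_of_gt hsp)]
        have hmemux : (ux, sstar) ∈ Wlev A b c δ :=
          ⟨⟨hAux, huxpos⟩, sstar_slack h, le_of_eq hgap⟩
        refine ⟨(ux, sstar), hmemux, (xstar, sstar), wstar_mem h hδ, ?_⟩
        have hsub : (ux, sstar) - (xstar, sstar) = (τ • colV hmn A j', (0 : Fin n → ℝ)) := by
          rw [Prod.mk_sub_mk, sub_self, huxdef, add_sub_cancel_left]
        rw [hsub, pairNorm_fst, toE_smul, norm_smul, Real.norm_eq_abs, abs_of_nonneg hτ0,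
          norm_colV, hM1, hτdef]
        ring
    · rw [max_eq_right hM]
      cases isEmpty_or_nonempty (Fin m) with
      | inl he =>
        have : M2 hmn A xstar = 0 := by rw [M2, Real.iSup_of_isEmpty]
        rw [this, mul_zero]
        exact hzero
      | inr hne =>
        obtain ⟨i', hi'⟩ := Finite.exists_max
          (fun i => Real.sqrt ((∑ j, (BN hmn A i j) ^ 2) + 1) / xstar (bIdx hmn i))
        have hM2 : M2 hmn A xstar
            = Real.sqrt ((∑ j, (BN hmn A i' j) ^ 2) + 1) / xstar (bIdx hmn i') := by
          rw [M2]
          exact le_antisymm (ciSup_le hi') (le_iSup_fin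
            (fun i => Real.sqrt ((∑ j, (BN hmn A i j) ^ 2) + 1) / xstar (bIdx hmn i)) i')
        set τ := δ / xstar (bIdx hmn i') with hτdef
        have hxp := xstar_b_pos h i'
        have hτ0 : 0 ≤ τ := div_nonneg hδ hxp.le
        have hdt : IsUnit ((Bmat hmn A)ᵀ).det := by
          rw [Matrix.det_transpose]; exact h.basis_isUnit
        set z := τ • (((Bmat hmn A)ᵀ)⁻¹ *ᵥ (fun i'' => if i'' = i' then (1:ℝ) else 0))
          with hzdef
        set us := sstar + Aᵀ *ᵥ z with husdef
        have husB : ∀ i, us (bIdx hmn i) = τ * (if i = i' then 1 else 0) := by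
          intro i
          have hb := congrFun (slack_sB h us z husdef) i
          rw [Function.comp_apply] at hb
          rw [hb, hzdef, Matrix.mulVec_smul, Matrix.mulVec_mulVec,
            Matrix.mul_nonsing_inv _ hdt, Matrix.one_mulVec]
          simp
        have husN : ∀ j, us (nIdx hmn j) = sstar (nIdx hmn j) + τ * BN hmn A i' j := by
          intro j
          have hnn := congrFun (slack_sN h us z husdef) j
          rw [Function.comp_apply] at hnn
          rw [hnn]
          congr 1
          have : us ∘ bIdx hmn = fun i => τ * (if i = i' then 1 else 0) := funext husB
          rw [this]
          simp [mulVec, dotProduct, mul_ite, mul_comm]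
        have huspos : ∀ i, 0 ≤ us i := by
          refine forall_split hmn _ (fun i => ?_) (fun j => ?_)
          · rw [husB i]; positivity
          · rw [husN j]
            have := hd4 (i', j)
            simp only at this
            have hτBN : τ * (-(BN hmn A i' j)) = δ * (-(BN hmn A i' j) / xstar (bIdx hmn i')) := by
              rw [hτdef]; ring
            nlinarith [hτBN ▸ this]
        have hgap : Gap A b c xstar us = δ := by
          rw [gap_constructed h xstar us z h.primal_feas.1 husdef, dot_sstar_eq h,
            xstar_dot_eq h]
          have e0 : ∑ j, xstar (nIdx hmn j) * sstar (nIdx hmn j) = 0 :=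
            Finset.sum_eq_zero fun j _ => by rw [xstar_n h, zero_mul]
          rw [e0, zero_add]
          have : ∀ i, xstar (bIdx hmn i) * us (bIdx hmn i)
              = if i = i' then xstar (bIdx hmn i') * τ else 0 := by
            intro i
            rw [husB i]
            by_cases hi : i = i' <;> simp [hi]
          rw [Finset.sum_congr rfl fun i _ => this i, Finset.sum_ite_eq' Finset.univ i']
          simp [hτdef]
          field_simp
        have hmemus : (xstar, us) ∈ Wlev A b c δ :=
          ⟨h.primal_feas, slack_of_z h us z husdef huspos, le_of_eq hgap⟩
        refine ⟨(xstar, us), hmemus, (xstar, sstar), wstar_mem h hδ, ?_⟩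
        have hrow : us - sstar = τ • rowV hmn A i' := by
          refine funext_split hmn (fun i => ?_) (fun j => ?_)
          · rw [Pi.sub_apply, husB i, sstar_b h, sub_zero, Pi.smul_apply, smul_eq_mul,
              rowV, glue_b]
          · rw [Pi.sub_apply, husN j, Pi.smul_apply, smul_eq_mul, rowV, glue_n]
            ring
        have hsub : (xstar, us) - (xstar, sstar) = ((0 : Fin n → ℝ), τ • rowV hmn A i') := by
          rw [Prod.mk_sub_mk, sub_self, hrow]
        rw [hsub, pairNorm_snd, toE_smul, norm_smul, Real.norm_eq_abs, abs_of_nonneg hτ0,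
          norm_rowV, hM2, hτdef]
        ring
  rw [Ddiam]
  exact le_csSup hbdd hmem

end Diam


/-! ### Radius computation -/

section Rad

variable {m n : ℕ} {hmn : m ≤ n} {A : Matrix (Fin m) (Fin n) ℝ} {b : Fin m → ℝ} {c : Fin n → ℝ}
  {xstar : Fin n → ℝ} {ystar : Fin m → ℝ} {sstar : Fin n → ℝ}

lemma L_pos (h : UniqueOpt hmn A b c xstar ystar sstar) (hn : 0 < n) :
    0 < l1 xstar + l1 sstar := by
  have h1 : 0 ≤ l1 xstar := Finset.sum_nonneg fun i _ => abs_nonneg _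
  have h2 : 0 ≤ l1 sstar := Finset.sum_nonneg fun i _ => abs_nonneg _
  rcases Nat.lt_or_ge 0 m with hm | hm
  · have : 0 < l1 xstar := by
      rw [l1_xstar h]
      exact Finset.sum_pos (fun i _ => xstar_b_pos h i) ⟨⟨0, hm⟩, Finset.mem_univ _⟩
    linarith
  · have hm0 : m = 0 := by omega
    have hnm : 0 < n - m := by omega
    have : 0 < l1 sstar := by
      rw [l1_sstar h]
      exact Finset.sum_pos (fun j _ => sstar_n_pos h j) ⟨⟨0, hnm⟩, Finset.mem_univ _⟩
    linarith

lemma rrad_part (h : UniqueOpt hmn A b c xstar ystar sstar) {δ : ℝ} (hδ : 0 ≤ δ)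
    (hd1 : ∀ i, δ / (l1 xstar + l1 sstar) * (1 + (BN hmn A *ᵥ (fun _ => (1:ℝ))) i)
      ≤ xstar (bIdx hmn i))
    (hd2 : ∀ j, δ / (l1 xstar + l1 sstar) * (1 - ((BN hmn A)ᵀ *ᵥ (fun _ => (1:ℝ))) j)
      ≤ sstar (nIdx hmn j)) :
    rrad A b c δ = δ / (l1 xstar + l1 sstar) := by
  rcases Nat.eq_zero_or_pos n with hn | hn
  · -- degenerate case n = 0
    subst hn
    have hL : l1 xstar + l1 sstar = 0 := by simp [l1]
    rw [hL, div_zero, rrad]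
    have hmem : (0:ℝ) ∈ {t | ∃ w ∈ Wlev A b c δ, t = min (⨅ i, w.1 i) (⨅ i, w.2 i)} :=
      ⟨(xstar, sstar), wstar_mem h hδ, by simp⟩
    refine le_antisymm (Real.sSup_le ?_ le_rfl) (le_csSup ⟨0, ?_⟩ hmem)
    · rintro t ⟨w, hw, rfl⟩
      simp
    · rintro t ⟨w, hw, rfl⟩
      simp
  · have hL : 0 < l1 xstar + l1 sstar := L_pos h hn
    set L := l1 xstar + l1 sstar with hLdef
    set t := δ / L with htdef
    have ht0 : 0 ≤ t := div_nonneg hδ hL.le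
    have hub : ∀ t' ∈ {t' | ∃ w ∈ Wlev A b c δ, t' = min (⨅ i, w.1 i) (⨅ i, w.2 i)},
        t' ≤ t := by
      rintro t' ⟨w, hw, rfl⟩
      obtain ⟨hp, ⟨⟨y, hy⟩, hsn⟩, hgap⟩ := hw
      set t'' := min (⨅ i, w.1 i) (⨅ i, w.2 i) with ht''
      rcases le_or_gt t'' 0 with hneg | hpos
      · exact le_trans hneg ht0
      · have hne : Nonempty (Fin n) := ⟨⟨0, hn⟩⟩
        have hw1 : ∀ i, t'' ≤ w.1 i := fun i =>
          le_trans (min_le_left _ _) (ciInf_le (Set.Finite.bddBelow (Set.finite_range _)) i)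
        have hw2 : ∀ i, t'' ≤ w.2 i := fun i =>
          le_trans (min_le_right _ _) (ciInf_le (Set.Finite.bddBelow (Set.finite_range _)) i)
        have hs : w.2 = sstar + Aᵀ *ᵥ (y + ystar) := slack_z h _ y hy
        have hgap' : w.1 ⬝ᵥ sstar + xstar ⬝ᵥ w.2 ≤ δ := by
          have e1 : Gap A b c w.1 w.2 = w.1 ⬝ᵥ w.2 := gap_eq_dot h w.1 w.2 y hp.1 hy
          have e2 : w.1 ⬝ᵥ w.2 = w.1 ⬝ᵥ sstar + xstar ⬝ᵥ w.2 :=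
            gap_split_dot h w.1 w.2 _ hp.1 hs
          rw [← e2, ← e1]; exact hgap
        have hb1 : t'' * l1 sstar ≤ w.1 ⬝ᵥ sstar := by
          rw [dot_sstar_eq h, l1_sstar h, Finset.mul_sum]
          exact Finset.sum_le_sum fun j _ =>
            mul_le_mul_of_nonneg_right (hw1 _) (sstar_n_pos h j).le
        have hb2 : t'' * l1 xstar ≤ xstar ⬝ᵥ w.2 := by
          rw [xstar_dot_eq h, l1_xstar h, Finset.mul_sum]
          refine Finset.sum_le_sum fun i _ => ?_
          rw [mul_comm t'']
          exact mul_le_mul_of_nonneg_left (hw2 _) (xstar_b_pos h i).le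
        have : t'' * L ≤ δ := by
          rw [hLdef, mul_add]
          linarith
        rw [htdef]
        exact (le_div_iff₀ hL).mpr this
    have hmem : t ∈ {t' | ∃ w ∈ Wlev A b c δ, t' = min (⨅ i, w.1 i) (⨅ i, w.2 i)} := by
      have hdt : IsUnit ((Bmat hmn A)ᵀ).det := by
        rw [Matrix.det_transpose]; exact h.basis_isUnit
      set xt := glue hmn (xstar ∘ bIdx hmn - t • (BN hmn A *ᵥ (fun _ => (1:ℝ))))
        (fun _ => t) with hxtdef
      set z := t • (((Bmat hmn A)ᵀ)⁻¹ *ᵥ (fun _ => (1:ℝ))) with hzdef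
      set st := sstar + Aᵀ *ᵥ z with hstdef
      have hxtb : ∀ i, xt (bIdx hmn i)
          = xstar (bIdx hmn i) - t * (BN hmn A *ᵥ (fun _ => (1:ℝ))) i := by
        intro i; rw [hxtdef, glue_b]; simp
      have hxtn : ∀ j, xt (nIdx hmn j) = t := fun j => by rw [hxtdef, glue_n]
      have hA : A *ᵥ xt = b := by
        rw [mulVec_split hmn A xt]
        have e1 : xt ∘ bIdx hmn
            = xstar ∘ bIdx hmn - t • (BN hmn A *ᵥ (fun _ => (1:ℝ))) := by
          funext i
          rw [Function.comp_apply, hxtb i]; simp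
        have e2 : xt ∘ nIdx hmn = t • (fun _ => (1:ℝ)) := by
          funext j
          rw [Function.comp_apply, hxtn j]; simp
        rw [e1, e2, Matrix.mulVec_sub, Matrix.mulVec_smul, Matrix.mulVec_smul,
          Matrix.mulVec_mulVec, B_mul_BN h.basis_isUnit, BxB h]
        abel
      have hstB : ∀ i, st (bIdx hmn i) = t := by
        intro i
        have hb := congrFun (slack_sB h st z hstdef) i
        rw [Function.comp_apply] at hb
        rw [hb, hzdef, Matrix.mulVec_smul, Matrix.mulVec_mulVec,
          Matrix.mul_nonsing_inv _ hdt, Matrix.one_mulVec]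
        simp
      have hstN : ∀ j, st (nIdx hmn j)
          = sstar (nIdx hmn j) + t * ((BN hmn A)ᵀ *ᵥ (fun _ => (1:ℝ))) j := by
        intro j
        have hnn := congrFun (slack_sN h st z hstdef) j
        rw [Function.comp_apply] at hnn
        rw [hnn]
        congr 1
        have e3 : st ∘ bIdx hmn = t • (fun _ => (1:ℝ)) := by
          funext i
          rw [Function.comp_apply, hstB i]; simp
        rw [e3, Matrix.mulVec_smul]
        simp
      have hxtge : ∀ i, t ≤ xt (bIdx hmn i) := by
        intro i
        rw [hxtb i]
        have := hd1 i
        nlinarith [this]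
      have hstge : ∀ j, t ≤ st (nIdx hmn j) := by
        intro j
        rw [hstN j]
        have := hd2 j
        nlinarith [this]
      have hxtpos : ∀ i, t ≤ xt i :=
        forall_split hmn _ hxtge (fun j => le_of_eq (hxtn j).symm)
      have hstpos : ∀ i, t ≤ st i :=
        forall_split hmn _ (fun i => le_of_eq (hstB i).symm) hstge
      have hgap : Gap A b c xt st = δ := by
        rw [gap_constructed h xt st z hA hstdef, dot_sstar_eq h, xstar_dot_eq h]
        have e1 : ∑ j, xt (nIdx hmn j) * sstar (nIdx hmn j) = t * l1 sstar := by
          rw [l1_sstar h, Finset.mul_sum]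
          exact Finset.sum_congr rfl fun j _ => by rw [hxtn j]
        have e2 : ∑ i, xstar (bIdx hmn i) * st (bIdx hmn i) = t * l1 xstar := by
          rw [l1_xstar h, Finset.mul_sum]
          exact Finset.sum_congr rfl fun i _ => by rw [hstB i]; ring
        rw [e1, e2, htdef, hLdef]
        have hL' : l1 xstar + l1 sstar ≠ 0 := ne_of_gt hL
        rw [div_mul_eq_mul_div, div_mul_eq_mul_div, ← add_div, ← mul_add, add_comm (l1 sstar)]
        exact mul_div_cancel_right₀ δ hL'
      have hmemw : (xt, st) ∈ Wlev A b c δ :=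
        ⟨⟨hA, fun i => le_trans ht0 (hxtpos i)⟩,
          slack_of_z h st z hstdef (fun i => le_trans ht0 (hstpos i)), le_of_eq hgap⟩
      refine ⟨(xt, st), hmemw, ?_⟩
      refine (min_iInf_eq hn t xt st hxtpos hstpos ?_).symm
      rcases Nat.lt_or_ge m n with hmn' | hmn'
      · exact Or.inl ⟨nIdx hmn ⟨0, by omega⟩, hxtn ⟨0, by omega⟩⟩
      · have hm : 0 < m := by omega
        exact Or.inr ⟨bIdx hmn ⟨0, hm⟩, hstB ⟨0, hm⟩⟩
    rw [rrad]
    exact le_antisymm (csSup_le ⟨t, hmem⟩ hub) (le_csSup ⟨t, hub⟩ hmem)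

end Rad

/-- Lemma 8 of the paper. Under the unique-optimum assumption, there is
`δ̄ > 0` such that for all `0 ≤ δ ≤ δ̄`: `D̂_δ ≤ D_δ ≤ 2·D̂_δ` and
`r_δ = δ/(‖x*‖₁ + ‖s*‖₁)`, where `D̂_δ := δ · max{max_j √(‖(B⁻¹N)_{·,j}‖²+1)/s*_{m+j},
max_i √(‖(B⁻¹N)_{i,·}‖²+1)/x*_i}` (which is `δ · PhiFactor`). -/
theorem sublevel_diameter_radius (m n : ℕ) (hmn : m ≤ n)
    (A : Matrix (Fin m) (Fin n) ℝ) (b : Fin m → ℝ) (c : Fin n → ℝ)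
    (xstar : Fin n → ℝ) (ystar : Fin m → ℝ) (sstar : Fin n → ℝ)
    (h : UniqueOpt hmn A b c xstar ystar sstar) :
    ∃ δbar : ℝ, 0 < δbar ∧ ∀ δ : ℝ, 0 ≤ δ → δ ≤ δbar →
      (δ * PhiFactor hmn A xstar sstar ≤ Ddiam A b c δ ∧
        Ddiam A b c δ ≤ 2 * (δ * PhiFactor hmn A xstar sstar) ∧
        rrad A b c δ = δ / (l1 xstar + l1 sstar)) := by
  have c1 : ∀ i : Fin m, ∃ d, 0 < d ∧ ∀ δ : ℝ, 0 ≤ δ → δ ≤ d →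
      δ / (l1 xstar + l1 sstar) * (1 + (BN hmn A *ᵥ fun _ => (1:ℝ)) i)
        ≤ xstar (bIdx hmn i) := by
    intro i
    obtain ⟨d, hd, hP⟩ := exists_bound
      ((1 + (BN hmn A *ᵥ fun _ => (1:ℝ)) i) / (l1 xstar + l1 sstar)) _ (xstar_b_pos h i)
    refine ⟨d, hd, fun δ h0 hdl => ?_⟩
    have e : δ / (l1 xstar + l1 sstar) * (1 + (BN hmn A *ᵥ fun _ => (1:ℝ)) i)
        = δ * ((1 + (BN hmn A *ᵥ fun _ => (1:ℝ)) i) / (l1 xstar + l1 sstar)) := by ring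
    rw [e]
    exact hP δ h0 hdl
  have c2 : ∀ j : Fin (n - m), ∃ d, 0 < d ∧ ∀ δ : ℝ, 0 ≤ δ → δ ≤ d →
      δ / (l1 xstar + l1 sstar) * (1 - ((BN hmn A)ᵀ *ᵥ fun _ => (1:ℝ)) j)
        ≤ sstar (nIdx hmn j) := by
    intro j
    obtain ⟨d, hd, hP⟩ := exists_bound
      ((1 - ((BN hmn A)ᵀ *ᵥ fun _ => (1:ℝ)) j) / (l1 xstar + l1 sstar)) _ (sstar_n_pos h j)
    refine ⟨d, hd, fun δ h0 hdl => ?_⟩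
    have e : δ / (l1 xstar + l1 sstar) * (1 - ((BN hmn A)ᵀ *ᵥ fun _ => (1:ℝ)) j)
        = δ * ((1 - ((BN hmn A)ᵀ *ᵥ fun _ => (1:ℝ)) j) / (l1 xstar + l1 sstar)) := by ring
    rw [e]
    exact hP δ h0 hdl
  have c3 : ∀ p : Fin m × Fin (n - m), ∃ d, 0 < d ∧ ∀ δ : ℝ, 0 ≤ δ → δ ≤ d →
      δ * (BN hmn A p.1 p.2 / sstar (nIdx hmn p.2)) ≤ xstar (bIdx hmn p.1) :=
    fun p => exists_bound _ _ (xstar_b_pos h p.1)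
  have c4 : ∀ p : Fin m × Fin (n - m), ∃ d, 0 < d ∧ ∀ δ : ℝ, 0 ≤ δ → δ ≤ d →
      δ * (-(BN hmn A p.1 p.2) / xstar (bIdx hmn p.1)) ≤ sstar (nIdx hmn p.2) :=
    fun p => exists_bound _ _ (sstar_n_pos h p.2)
  obtain ⟨d1, hd1pos, hd1⟩ := forall_small _ c1
  obtain ⟨d2, hd2pos, hd2⟩ := forall_small _ c2
  obtain ⟨d3, hd3pos, hd3⟩ := forall_small _ c3
  obtain ⟨d4, hd4pos, hd4⟩ := forall_small _ c4
  refine ⟨min (min d1 d2) (min d3 d4), by positivity, fun δ h0 hδ => ?_⟩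
  have hδ1 : δ ≤ d1 := le_trans hδ (le_trans (min_le_left _ _) (min_le_left _ _))
  have hδ2 : δ ≤ d2 := le_trans hδ (le_trans (min_le_left _ _) (min_le_right _ _))
  have hδ3 : δ ≤ d3 := le_trans hδ (le_trans (min_le_right _ _) (min_le_left _ _))
  have hδ4 : δ ≤ d4 := le_trans hδ (le_trans (min_le_right _ _) (min_le_right _ _))
  exact ⟨diam_lower h h0 (hd3 δ h0 hδ3) (hd4 δ h0 hδ4), diam_upper h h0,
    rrad_part h h0 (hd1 δ h0 hδ1) (hd2 δ h0 hδ2)⟩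

end LPPaper
end
end

section
/- Consider the generic LP min gᵀu over u ∈ V ∩ ℝⁿ₊, where V ⊂ ℝⁿ is an affine subspace, and suppose its optimal solution set OPT(g) is the singleton {u*}. Then the stability under data perturbations, the proximity to multiple optima, and the LP sharpness satisfy ζ = η = ‖P_{V⃗}(g)‖ · μ, where V⃗ is the linear subspace parallel to V and P_{V⃗} is orthogonal projection onto V⃗. -/
open scoped BigOperators RealInnerProductSpace

noncomputable section

namespace LPGeneric

/-- `ℝⁿ` with the Euclidean norm. -/
abbrev E (n : ℕ) := EuclideanSpace ℝ (Fin n)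

variable {n : ℕ}

/-- The feasible set `F = V ∩ ℝⁿ₊` of the generic LP. -/
def Feas (V : AffineSubspace ℝ (E n)) : Set (E n) := {u | u ∈ V ∧ ∀ i, 0 ≤ u i}

/-- The optimal-solution set `OPT(g)` of the generic LP `min gᵀu` over `V ∩ ℝⁿ₊`. -/
def OPT (V : AffineSubspace ℝ (E n)) (g : E n) : Set (E n) :=
  {u | u ∈ Feas V ∧ ∀ v ∈ Feas V, ∑ i, g i * u i ≤ ∑ i, g i * v i}

/-- Stability under data perturbations:
`ζ := inf{‖Δg‖ : OPT(g+Δg) ≠ ∅ and OPT(g+Δg) ⊄ OPT(g)}`. -/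
def zeta (V : AffineSubspace ℝ (E n)) (g : E n) : ℝ :=
  sInf {t | ∃ dg : E n, t = ‖dg‖ ∧ (OPT V (g + dg)).Nonempty ∧ ¬ OPT V (g + dg) ⊆ OPT V g}

/-- Proximity to multiple optima:
`η := inf{‖Δg‖ : OPT(g+Δg) contains more than one point}`. -/
def eta (V : AffineSubspace ℝ (E n)) (g : E n) : ℝ :=
  sInf {t | ∃ dg : E n, t = ‖dg‖ ∧ ∃ u v, u ∈ OPT V (g + dg) ∧ v ∈ OPT V (g + dg) ∧ u ≠ v}

/-- LP sharpness:
`μ := inf_{u ∈ F \ OPT(g)} Dist(u, V ∩ {v : gᵀv = gᵀu*}) / Dist(u, OPT(g))`. -/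
def mu (V : AffineSubspace ℝ (E n)) (g ustar : E n) : ℝ :=
  sInf {t | ∃ u ∈ Feas V, u ∉ OPT V g ∧
    t = Metric.infDist u ((V : Set (E n)) ∩ {v | ∑ i, g i * v i = ∑ i, g i * ustar i}) /
        Metric.infDist u (OPT V g)}

lemma le_infDist' {s : Set (E n)} {x : E n} {b : ℝ} (hs : s.Nonempty)
    (h : ∀ y ∈ s, b ≤ dist x y) : b ≤ Metric.infDist x s := by
  refine le_of_not_gt fun hlt => ?_
  obtain ⟨y, hy, hd⟩ := (Metric.infDist_lt_iff hs).1 hlt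
  exact absurd (h y hy) (not_le.2 hd)

lemma sum_mul_eq_inner (g u : E n) : ∑ i, g i * u i = ⟪g, u⟫ := by
  simp [PiLp.inner_apply, RCLike.inner_apply, mul_comm]

lemma abs_coord_le_norm (x : E n) (i : Fin n) : |x i| ≤ ‖x‖ := by
  rw [EuclideanSpace.norm_eq]
  have h1 : |x i|^2 ≤ ∑ j, ‖x j‖^2 := by
    have := Finset.single_le_sum (f := fun j => ‖x j‖^2) (fun j _ => sq_nonneg _)
      (Finset.mem_univ i)
    simpa [Real.norm_eq_abs] using this
  calc |x i| = Real.sqrt (|x i|^2) := (Real.sqrt_sq (abs_nonneg _)).symm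
    _ ≤ _ := Real.sqrt_le_sqrt h1

/-- Objective difference on `V` only depends on the projected cost. -/
lemma inner_proj_eq (V : AffineSubspace ℝ (E n)) (g : E n) {x : E n} (hx : x ∈ V.direction) :
    ⟪g, x⟫ = ⟪(Submodule.orthogonalProjectionOnto V.direction g : E n), x⟫ := by
  have h : g - (Submodule.orthogonalProjectionOnto V.direction g : E n) ∈ V.directionᗮ :=
    Submodule.sub_starProjection_mem_orthogonal (K := V.direction) g
  have h0 : ⟪g - (Submodule.orthogonalProjectionOnto V.direction g : E n), x⟫ = 0 :=
    real_inner_comm x _ ▸ h x hx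
  rw [inner_sub_left] at h0
  linarith



set_option maxHeartbeats 2000000 in
/-- Theorem 4 of the paper. For the generic LP `min gᵀu` over
`V ∩ ℝⁿ₊` with unique optimal solution `u*`, the stability under data perturbations, the
proximity to multiple optima, and the LP sharpness satisfy `ζ = η = ‖P_{V⃗}(g)‖ · μ`. -/
theorem zeta_eq_eta_eq_proj_mul_mu (n : ℕ) (V : AffineSubspace ℝ (E n)) (g ustar : E n)
    (hopt : OPT V g = {ustar}) :
    zeta V g = eta V g ∧
    zeta V g = ‖(Submodule.orthogonalProjectionOnto V.direction g : E n)‖ * mu V g ustar := by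
  classical
  set gbar : E n := (Submodule.orthogonalProjectionOnto V.direction g : E n) with hgbar_def
  have hgbar_mem : gbar ∈ V.direction := by rw [hgbar_def]; exact SetLike.coe_mem _
  have hproj : ∀ x ∈ V.direction, ⟪g, x⟫ = ⟪gbar, x⟫ := fun x hx => inner_proj_eq V g hx
  have hustar_opt : ustar ∈ OPT V g := by rw [hopt]; rfl
  have hustar_feas : ustar ∈ Feas V := hustar_opt.1
  have hstrict : ∀ u ∈ Feas V, u ≠ ustar → 0 < ⟪gbar, u - ustar⟫ := by
    intro u hu hne
    have hdir : u - ustar ∈ V.direction := by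
      simpa [vsub_eq_sub] using AffineSubspace.vsub_mem_direction hu.1 hustar_feas.1
    have hle : ∑ i, g i * ustar i ≤ ∑ i, g i * u i := hustar_opt.2 u hu
    have hne' : ∑ i, g i * ustar i ≠ ∑ i, g i * u i := by
      intro heq
      have hmem : u ∈ OPT V g := ⟨hu, fun v hv => heq ▸ hustar_opt.2 v hv⟩
      rw [hopt] at hmem; exact hne hmem
    have hlt : ∑ i, g i * ustar i < ∑ i, g i * u i := lt_of_le_of_ne hle hne'
    rw [sum_mul_eq_inner, sum_mul_eq_inner] at hlt
    have h0 : 0 < ⟪g, u - ustar⟫ := by rw [inner_sub_right]; linarith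
    rwa [hproj _ hdir] at h0
  by_cases hsing : ∀ u ∈ Feas V, u = ustar
  · -- degenerate case : the feasible set is the singleton {ustar}
    have hz : zeta V g = 0 := by
      have he : {t | ∃ dg : E n, t = ‖dg‖ ∧ (OPT V (g + dg)).Nonempty ∧
          ¬ OPT V (g + dg) ⊆ OPT V g} = (∅ : Set ℝ) := by
        ext t
        simp only [Set.mem_setOf_eq, Set.mem_empty_iff_false, iff_false, not_exists]
        rintro dg ⟨-, -, hns⟩
        exact hns (fun u hu => by rw [hopt, hsing u hu.1]; rfl)
      rw [zeta, he, Real.sInf_empty]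
    have he : eta V g = 0 := by
      have he : {t | ∃ dg : E n, t = ‖dg‖ ∧ ∃ u v, u ∈ OPT V (g + dg) ∧
          v ∈ OPT V (g + dg) ∧ u ≠ v} = (∅ : Set ℝ) := by
        ext t
        simp only [Set.mem_setOf_eq, Set.mem_empty_iff_false, iff_false, not_exists]
        rintro dg ⟨-, u, v, hu, hv, huv⟩
        exact huv ((hsing u hu.1).trans (hsing v hv.1).symm)
      rw [eta, he, Real.sInf_empty]
    have hm : mu V g ustar = 0 := by
      have he : {t | ∃ u ∈ Feas V, u ∉ OPT V g ∧
          t = Metric.infDist u ((V : Set (E n)) ∩ {v | ∑ i, g i * v i = ∑ i, g i * ustar i}) /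
              Metric.infDist u (OPT V g)} = (∅ : Set ℝ) := by
        ext t
        simp only [Set.mem_setOf_eq, Set.mem_empty_iff_false, iff_false, not_exists]
        rintro u ⟨hu, hnot, -⟩
        exact hnot (by rw [hopt, hsing u hu]; rfl)
      rw [mu, he, Real.sInf_empty]
    rw [hz, he, hm, mul_zero]
    exact ⟨rfl, rfl⟩
  · push_neg at hsing
    obtain ⟨u0, hu0, hu0ne⟩ := hsing
    have hfin : Nonempty (Fin n) := by
      rcases isEmpty_or_nonempty (Fin n) with h | h
      · exact absurd (PiLp.ext fun i => (h.false i).elim : u0 = ustar) hu0ne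
      · exact h
    have hgbar_ne : gbar ≠ 0 := by
      intro h0
      have := hstrict u0 hu0 hu0ne
      rw [h0, inner_zero_left] at this
      exact lt_irrefl 0 this
    have hgnorm_pos : 0 < ‖gbar‖ := norm_pos_iff.2 hgbar_ne
    -- the cone of feasible directions at `ustar`, intersected with the unit sphere
    set K : Set (E n) := {d | d ∈ V.direction ∧ ∀ i, ustar i = 0 → 0 ≤ d i} with hK_def
    set KS : Set (E n) := K ∩ Metric.sphere (0 : E n) 1 with hKS_def
    have hKS_of : ∀ u ∈ Feas V, u ≠ ustar → (‖u - ustar‖⁻¹ • (u - ustar)) ∈ KS := by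
      intro u hu hne
      have hdir : u - ustar ∈ V.direction := by
        simpa [vsub_eq_sub] using AffineSubspace.vsub_mem_direction hu.1 hustar_feas.1
      have hnorm_ne : ‖u - ustar‖ ≠ 0 := norm_ne_zero_iff.2 (sub_ne_zero.2 hne)
      refine ⟨⟨Submodule.smul_mem _ _ hdir, ?_⟩, ?_⟩
      · intro i hi
        have h1 : 0 ≤ (u - ustar) i := by
          have := hu.2 i
          simp only [PiLp.sub_apply, hi, sub_zero]
          exact this
        have h2 : (‖u - ustar‖⁻¹ • (u - ustar)) i = ‖u - ustar‖⁻¹ * (u - ustar) i := by simp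
        rw [h2]
        exact mul_nonneg (inv_nonneg.2 (norm_nonneg _)) h1
      · simp only [mem_sphere_iff_norm, sub_zero, norm_smul, norm_inv, norm_norm]
        exact inv_mul_cancel₀ hnorm_ne
    have hKSne : KS.Nonempty := ⟨_, hKS_of u0 hu0 hu0ne⟩
    have hKclosed : IsClosed K := by
      have h1 : IsClosed (V.direction : Set (E n)) := Submodule.closed_of_finiteDimensional _
      have h2 : IsClosed {d : E n | ∀ i, ustar i = 0 → 0 ≤ d i} := by
        have he : {d : E n | ∀ i, ustar i = 0 → 0 ≤ d i} =
            ⋂ i, {d : E n | ustar i = 0 → 0 ≤ d i} := by ext d; simp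
        rw [he]
        refine isClosed_iInter fun i => ?_
        by_cases hi : ustar i = 0
        · have he2 : {d : E n | ustar i = 0 → 0 ≤ d i} = {d : E n | 0 ≤ d i} := by
            ext d; simp [hi]
          rw [he2]
          exact (isClosed_Ici (a := (0:ℝ))).preimage (EuclideanSpace.proj (𝕜 := ℝ) i).continuous
        · have he2 : {d : E n | ustar i = 0 → 0 ≤ d i} = Set.univ := by ext d; simp [hi]
          rw [he2]; exact isClosed_univ
      have he : K = (V.direction : Set (E n)) ∩ {d : E n | ∀ i, ustar i = 0 → 0 ≤ d i} := by
        ext d; simp [hK_def, Set.mem_inter_iff, SetLike.mem_coe]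
      rw [he]
      exact h1.inter h2
    have hKScomp : IsCompact KS :=
      Metric.isCompact_of_isClosed_isBounded (hKclosed.inter Metric.isClosed_sphere)
        ((Metric.isBounded_sphere (x := (0 : E n)) (r := 1)).subset Set.inter_subset_right)
    have hcont : Continuous fun d : E n => ⟪gbar, d⟫ :=
      Continuous.inner continuous_const continuous_id
    obtain ⟨dbar, hdbarKS, hdbar_min⟩ := hKScomp.exists_isMinOn hKSne hcont.continuousOn
    set muh : ℝ := ⟪gbar, dbar⟫ with hmuh_def
    have hdbar_norm : ‖dbar‖ = 1 := by simpa using hdbarKS.2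
    have hratio : ∀ u ∈ Feas V, u ≠ ustar → muh * ‖u - ustar‖ ≤ ⟪gbar, u - ustar⟫ := by
      intro u hu hne
      have h1 := hdbar_min (hKS_of u hu hne)
      simp only [Set.mem_setOf_eq, id] at h1
      rw [real_inner_smul_right] at h1
      rw [← hmuh_def] at h1
      have hpos : 0 < ‖u - ustar‖ := norm_pos_iff.2 (sub_ne_zero.2 hne)
      have h2 := mul_le_mul_of_nonneg_right h1 hpos.le
      rwa [mul_comm (‖u - ustar‖⁻¹) _, mul_assoc, inv_mul_cancel₀ hpos.ne', mul_one] at h2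
    -- a feasible point in direction `dbar`
    set m : ℝ := Finset.univ.inf' Finset.univ_nonempty
      (fun i => if ustar i = 0 then 1 else ustar i) with hm_def
    have hm_pos : 0 < m := by
      rw [hm_def, Finset.lt_inf'_iff]
      intro i _
      by_cases hi : ustar i = 0
      · simp [hi]
      · simpa [hi] using lt_of_le_of_ne (hustar_feas.2 i) (Ne.symm hi)
    have hm_le : ∀ i, ustar i ≠ 0 → m ≤ ustar i := by
      intro i hi
      have := Finset.inf'_le (f := fun i => if ustar i = 0 then 1 else ustar i)
        (Finset.mem_univ i)
      rw [hm_def]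
      exact this.trans_eq (if_neg hi)
    set u1 : E n := ustar + m • dbar with hu1_def
    have hu1_sub : u1 - ustar = m • dbar := by rw [hu1_def]; abel
    have hu1_feas : u1 ∈ Feas V := by
      constructor
      · have h := AffineSubspace.vadd_mem_of_mem_direction
          (Submodule.smul_mem _ m hdbarKS.1.1) hustar_feas.1
        rw [hu1_def]
        simpa [vadd_eq_add, add_comm] using h
      · intro i
        have hcoord : u1 i = ustar i + m * dbar i := by rw [hu1_def]; simp
        by_cases hi : ustar i = 0
        · have h1 := hdbarKS.1.2 i hi
          rw [hcoord, hi, zero_add]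
          exact mul_nonneg hm_pos.le h1
        · have h1 : |dbar i| ≤ 1 := hdbar_norm ▸ abs_coord_le_norm dbar i
          have h2 : m ≤ ustar i := hm_le i hi
          have h3 : -1 ≤ dbar i := neg_le_of_abs_le h1
          rw [hcoord]
          nlinarith
    have hu1_ne : u1 ≠ ustar := by
      intro h
      have h0 : m • dbar = 0 := by rw [← hu1_sub, h, sub_self]
      have h1 : ‖m • dbar‖ = m := by
        rw [norm_smul, hdbar_norm, mul_one, Real.norm_eq_abs, abs_of_pos hm_pos]
      rw [h0, norm_zero] at h1
      exact hm_pos.ne h1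
    have hmuh_pos : 0 < muh := by
      have h := hstrict u1 hu1_feas hu1_ne
      rw [hu1_sub, real_inner_smul_right] at h
      nlinarith
    -- the optimal perturbation
    set dg0 : E n := (-muh) • dbar with hdg0_def
    have hdg0_norm : ‖dg0‖ = muh := by
      rw [hdg0_def, norm_smul, hdbar_norm, mul_one, Real.norm_eq_abs, abs_neg,
        abs_of_pos hmuh_pos]
    have hustar_opt' : ustar ∈ OPT V (g + dg0) := by
      refine ⟨hustar_feas, fun v hv => ?_⟩
      rw [sum_mul_eq_inner, sum_mul_eq_inner]
      rcases eq_or_ne v ustar with rfl | hvne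
      · exact le_refl _
      have hdirv : v - ustar ∈ V.direction := by
        simpa [vsub_eq_sub] using AffineSubspace.vsub_mem_direction hv.1 hustar_feas.1
      have h1 : muh * ‖v - ustar‖ ≤ ⟪gbar, v - ustar⟫ := hratio v hv hvne
      have h2 : ⟪g, v - ustar⟫ = ⟪gbar, v - ustar⟫ := hproj _ hdirv
      have h3 : ⟪dbar, v - ustar⟫ ≤ ‖v - ustar‖ := by
        have := real_inner_le_norm dbar (v - ustar)
        rwa [hdbar_norm, one_mul] at this
      have h4 : ⟪g + dg0, v⟫ - ⟪g + dg0, ustar⟫ = ⟪g + dg0, v - ustar⟫ := by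
        rw [inner_sub_right]
      have h5 : ⟪g + dg0, v - ustar⟫ =
          ⟪g, v - ustar⟫ + (-muh) * ⟪dbar, v - ustar⟫ := by
        rw [inner_add_left, hdg0_def, real_inner_smul_left]
      nlinarith
    have hval_eq : ⟪g + dg0, u1⟫ = ⟪g + dg0, ustar⟫ := by
      have h1 : ⟪g + dg0, u1⟫ - ⟪g + dg0, ustar⟫ = ⟪g + dg0, u1 - ustar⟫ := by
        rw [inner_sub_right]
      have e1 : ⟪g, dbar⟫ = muh := (hproj _ hdbarKS.1.1).trans hmuh_def.symm
      have e2 : ⟪dbar, dbar⟫ = 1 := by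
        rw [real_inner_self_eq_norm_sq, hdbar_norm]; norm_num
      have h2 : ⟪g + dg0, u1 - ustar⟫ = m * (muh + (-muh) * 1) := by
        rw [hu1_sub, inner_add_left, hdg0_def, real_inner_smul_left, real_inner_smul_right,
          real_inner_smul_right, e1, e2]
        ring
      have h3 : m * (muh + (-muh) * 1) = 0 := by ring
      linarith [h1, h2, h3]
    have hu1_opt' : u1 ∈ OPT V (g + dg0) := by
      refine ⟨hu1_feas, fun v hv => ?_⟩
      have h := hustar_opt'.2 v hv
      rw [sum_mul_eq_inner, sum_mul_eq_inner] at h ⊢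
      rwa [hval_eq]
    -- the three quantities all equal muh / computations
    have hZ_lb : ∀ t ∈ {t | ∃ dg : E n, t = ‖dg‖ ∧ (OPT V (g + dg)).Nonempty ∧
        ¬ OPT V (g + dg) ⊆ OPT V g}, muh ≤ t := by
      rintro t ⟨dg, rfl, -, hns⟩
      obtain ⟨u, hu, hu_not⟩ := Set.not_subset.1 hns
      have hune : u ≠ ustar := fun h => hu_not (by rw [hopt, h]; rfl)
      have hufeas : u ∈ Feas V := hu.1
      have hdir : u - ustar ∈ V.direction := by
        simpa [vsub_eq_sub] using AffineSubspace.vsub_mem_direction hufeas.1 hustar_feas.1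
      have h1 : ∑ i, (g + dg) i * u i ≤ ∑ i, (g + dg) i * ustar i := hu.2 ustar hustar_feas
      rw [sum_mul_eq_inner, sum_mul_eq_inner] at h1
      have h2 : ⟪g + dg, u - ustar⟫ ≤ 0 := by rw [inner_sub_right]; linarith
      rw [inner_add_left] at h2
      have h3 : ⟪g, u - ustar⟫ = ⟪gbar, u - ustar⟫ := hproj _ hdir
      have h4 : muh * ‖u - ustar‖ ≤ ⟪gbar, u - ustar⟫ := hratio u hufeas hune
      have h5 : |⟪dg, u - ustar⟫| ≤ ‖dg‖ * ‖u - ustar‖ := abs_real_inner_le_norm _ _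
      have h6 : -(‖dg‖ * ‖u - ustar‖) ≤ ⟪dg, u - ustar⟫ := neg_le_of_neg_le
        (le_trans (neg_le_abs _) h5)
      have hpos : 0 < ‖u - ustar‖ := norm_pos_iff.2 (sub_ne_zero.2 hune)
      nlinarith
    have hmuh_in_Z : muh ∈ {t | ∃ dg : E n, t = ‖dg‖ ∧ (OPT V (g + dg)).Nonempty ∧
        ¬ OPT V (g + dg) ⊆ OPT V g} := by
      refine ⟨dg0, hdg0_norm.symm, ⟨ustar, hustar_opt'⟩, fun hsub => ?_⟩
      have h := hsub hu1_opt'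
      rw [hopt] at h
      exact hu1_ne h
    have hmuh_in_E : muh ∈ {t | ∃ dg : E n, t = ‖dg‖ ∧ ∃ u v, u ∈ OPT V (g + dg) ∧
        v ∈ OPT V (g + dg) ∧ u ≠ v} :=
      ⟨dg0, hdg0_norm.symm, u1, ustar, hu1_opt', hustar_opt', hu1_ne⟩
    have hE_lb : ∀ t ∈ {t | ∃ dg : E n, t = ‖dg‖ ∧ ∃ u v, u ∈ OPT V (g + dg) ∧
        v ∈ OPT V (g + dg) ∧ u ≠ v}, muh ≤ t := by
      rintro t ⟨dg, rfl, u, v, hu, hv, huv⟩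
      refine hZ_lb _ ⟨dg, rfl, ⟨u, hu⟩, fun hsub => ?_⟩
      have h1 := hsub hu
      have h2 := hsub hv
      rw [hopt] at h1 h2
      exact huv (h1.trans h2.symm)
    have hzeta : zeta V g = muh := by
      refine le_antisymm (csInf_le ⟨0, ?_⟩ hmuh_in_Z) (le_csInf ⟨muh, hmuh_in_Z⟩ hZ_lb)
      rintro t ⟨dg, rfl, -⟩
      exact norm_nonneg _
    have heta : eta V g = muh := by
      refine le_antisymm (csInf_le ⟨0, ?_⟩ hmuh_in_E) (le_csInf ⟨muh, hmuh_in_E⟩ hE_lb)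
      rintro t ⟨dg, rfl, -⟩
      exact norm_nonneg _
    -- computing the sharpness
    set Hs : Set (E n) :=
      (V : Set (E n)) ∩ {v | ∑ i, g i * v i = ∑ i, g i * ustar i} with hHs_def
    have hHne : Hs.Nonempty := ⟨ustar, hustar_feas.1, rfl⟩
    have hinfH : ∀ u ∈ Feas V, u ≠ ustar →
        Metric.infDist u Hs = ⟪gbar, u - ustar⟫ / ‖gbar‖ := by
      intro u hu hne
      have hcpos : 0 < ⟪gbar, u - ustar⟫ := hstrict u hu hne
      set c : ℝ := ⟪gbar, u - ustar⟫ with hc_def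
      refine le_antisymm ?_ ?_
      · set h0 : E n := u - (c / ‖gbar‖ ^ 2) • gbar with hh0_def
        have hh0V : h0 ∈ V := by
          have h := AffineSubspace.vadd_mem_of_mem_direction
            (Submodule.smul_mem _ (-(c / ‖gbar‖ ^ 2)) hgbar_mem) hu.1
          rw [hh0_def, sub_eq_neg_add, ← neg_smul]
          simpa [vadd_eq_add] using h
        have hdirh : h0 - ustar ∈ V.direction := by
          simpa [vsub_eq_sub] using AffineSubspace.vsub_mem_direction hh0V hustar_feas.1
        have hh0obj : ∑ i, g i * h0 i = ∑ i, g i * ustar i := by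
          rw [sum_mul_eq_inner, sum_mul_eq_inner]
          have e1 : ⟪g, h0⟫ - ⟪g, ustar⟫ = ⟪gbar, h0 - ustar⟫ := by
            rw [← inner_sub_right]; exact hproj _ hdirh
          have e0 : h0 - ustar = (u - ustar) - (c / ‖gbar‖ ^ 2) • gbar := by
            rw [hh0_def]; abel
          have e2 : ⟪gbar, h0 - ustar⟫ = c - (c / ‖gbar‖ ^ 2) * ‖gbar‖ ^ 2 := by
            rw [e0, inner_sub_right, real_inner_smul_right, real_inner_self_eq_norm_sq,
              ← hc_def]
          have e3 : c - (c / ‖gbar‖ ^ 2) * ‖gbar‖ ^ 2 = 0 := by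
            field_simp
            ring
          linarith
        have hd : dist u h0 = c / ‖gbar‖ := by
          have e0 : u - h0 = (c / ‖gbar‖ ^ 2) • gbar := by rw [hh0_def]; abel
          rw [dist_eq_norm, e0, norm_smul, Real.norm_eq_abs,
            abs_of_pos (div_pos hcpos (pow_pos hgnorm_pos 2))]
          field_simp
        calc Metric.infDist u Hs ≤ dist u h0 := Metric.infDist_le_dist_of_mem ⟨hh0V, hh0obj⟩
          _ = c / ‖gbar‖ := hd
      · refine le_infDist' hHne fun y hy => ?_
        have hydir : y - ustar ∈ V.direction := by
          simpa [vsub_eq_sub] using AffineSubspace.vsub_mem_direction hy.1 hustar_feas.1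
        have hyobj : ⟪gbar, y - ustar⟫ = 0 := by
          have h := hy.2
          rw [Set.mem_setOf_eq, sum_mul_eq_inner, sum_mul_eq_inner] at h
          rw [← hproj _ hydir, inner_sub_right]
          linarith
        have e0 : u - y = (u - ustar) - (y - ustar) := by abel
        have h2 : c = ⟪gbar, u - y⟫ := by
          rw [e0, inner_sub_right, hyobj, sub_zero, hc_def]
        have h3 : ⟪gbar, u - y⟫ ≤ ‖gbar‖ * ‖u - y‖ := real_inner_le_norm _ _
        rw [dist_eq_norm, div_le_iff₀ hgnorm_pos, mul_comm]
        linarith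
    have hinfOPT : ∀ u : E n, Metric.infDist u (OPT V g) = dist u ustar := by
      intro u; rw [hopt, Metric.infDist_singleton]
    have hM_mem : muh / ‖gbar‖ ∈ {t | ∃ u ∈ Feas V, u ∉ OPT V g ∧
        t = Metric.infDist u Hs / Metric.infDist u (OPT V g)} := by
      refine ⟨u1, hu1_feas, fun h => hu1_ne (by rw [hopt] at h; exact h), ?_⟩
      rw [hinfH u1 hu1_feas hu1_ne, hinfOPT, dist_eq_norm, hu1_sub, real_inner_smul_right,
        norm_smul, hdbar_norm, Real.norm_eq_abs, abs_of_pos hm_pos, mul_one, ← hmuh_def]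
      rw [eq_comm]
      field_simp [hm_pos.ne', hgnorm_pos.ne']
    have hM_lb : ∀ t ∈ {t | ∃ u ∈ Feas V, u ∉ OPT V g ∧
        t = Metric.infDist u Hs / Metric.infDist u (OPT V g)}, muh / ‖gbar‖ ≤ t := by
      rintro t ⟨u, hu, hu_not, rfl⟩
      have hune : u ≠ ustar := fun h => hu_not (h ▸ hustar_opt)
      rw [hinfH u hu hune, hinfOPT, dist_eq_norm]
      have h4 : muh * ‖u - ustar‖ ≤ ⟪gbar, u - ustar⟫ := hratio u hu hune
      have hpos : 0 < ‖u - ustar‖ := norm_pos_iff.2 (sub_ne_zero.2 hune)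
      rw [div_div, div_le_div_iff₀ hgnorm_pos (by positivity)]
      nlinarith
    have hmu : mu V g ustar = muh / ‖gbar‖ := by
      refine le_antisymm (csInf_le ⟨0, ?_⟩ hM_mem) (le_csInf ⟨_, hM_mem⟩ hM_lb)
      rintro t ⟨u, -, -, rfl⟩
      exact div_nonneg Metric.infDist_nonneg Metric.infDist_nonneg
    refine ⟨hzeta.trans heta.symm, ?_⟩
    rw [hzeta, hmu, mul_comm, div_mul_cancel₀ _ hgnorm_pos.ne']

end LPGeneric
end
end
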